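/- arXiv:1111.5071 — 8 statements merged into one kernel-verified Lean document; each statement's English description precedes it below -/
import Mathlib

section
/- For every positive integer n, the sum over r from 1 to n and over all compositions (k_1,...,k_r) of n into positive parts of n!/(k_1!k_2!...k_r!) · k_1^{k_2} · k_2^{k_3} · ... · k_{r-1}^{k_r} equals (n+1)^{n-1}. -/
open Finset

/-- The chain product `k₁^{k₂} k₂^{k₃} ⋯ k_{r-1}^{k_r}` (interpreted as `1` when `r = 1`). -/
def chainProd {r : ℕ} (k : Fin r → ℕ) : ℕ :=
  ∏ i : Fin r, if h : (i : ℕ) + 1 < r then (k i) ^ (k ⟨(i : ℕ) + 1, h⟩) else 1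

/-- The first entry of a tuple, or `0` if the tuple is empty. -/
def headVal {r : ℕ} (k : Fin r → ℕ) : ℕ := if h : 0 < r then k ⟨0, h⟩ else 0

/-- The set of compositions of `n` into `r` positive parts. -/
def compSet (r n : ℕ) : Finset (Fin r → ℕ) :=
  (Nat.antidiagonalTuple r n).filter (fun k => ∀ i, 1 ≤ k i)

/-- The weighted sum `A x n`. -/
def A (x n : ℕ) : ℕ :=
  ∑ r ∈ Icc 1 n, ∑ k ∈ compSet r n,
    Nat.multinomial Finset.univ k * x ^ headVal k * chainProd k

lemma mem_compSet {r n : ℕ} {k : Fin r → ℕ} :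
    k ∈ compSet r n ↔ (∑ i, k i) = n ∧ ∀ i, 1 ≤ k i := by
  simp [compSet, Finset.Nat.mem_antidiagonalTuple]

lemma compSet_empty {r n : ℕ} (h : n < r) : compSet r n = ∅ := by
  rw [Finset.eq_empty_iff_forall_notMem]
  intro k hk
  rw [mem_compSet] at hk
  have h2 : (r : ℕ) ≤ ∑ i, k i := by
    calc (r : ℕ) = ∑ _i : Fin r, 1 := by simp
    _ ≤ ∑ i, k i := Finset.sum_le_sum (fun i _ => hk.2 i)
  omega

lemma cons_mk_succ {r : ℕ} (m : ℕ) (k : Fin r → ℕ) (i : ℕ) (h : i + 1 < r + 1) :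
    Fin.cons (α := fun _ => ℕ) m k ⟨i + 1, h⟩ = k ⟨i, by omega⟩ := by
  have heq : (⟨i + 1, h⟩ : Fin (r + 1)) = Fin.succ ⟨i, by omega⟩ := by
    simp [Fin.ext_iff]
  rw [heq, Fin.cons_succ]

lemma headVal_cons {r : ℕ} (m : ℕ) (k : Fin r → ℕ) : headVal (Fin.cons m k) = m := by
  simp [headVal]

lemma chainProd_cons {r : ℕ} (m : ℕ) (k : Fin r → ℕ) :
    chainProd (Fin.cons m k) = m ^ headVal k * chainProd k := by
  rw [chainProd, Fin.prod_univ_succ]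
  congr 1
  · rcases Nat.eq_zero_or_pos r with hr | hr
    · subst hr; simp [headVal]
    · simp only [show ((0 : Fin (r+1)) : ℕ) = 0 from rfl]
      rw [dif_pos (show (0 : ℕ) + 1 < r + 1 by omega), Fin.cons_zero,
        cons_mk_succ m k 0 (by omega), headVal, dif_pos hr]
  · rw [chainProd]
    apply Finset.prod_congr rfl
    intro i _
    rcases Nat.lt_or_ge ((i : ℕ) + 1) r with h | h
    · rw [dif_pos (show ((Fin.succ i : Fin (r+1)) : ℕ) + 1 < r + 1 by simp; omega), dif_pos h,
        Fin.cons_succ]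
      congr 1
    · rw [dif_neg (by simp; omega), dif_neg (by omega)]

lemma multinomial_fin_cons {r : ℕ} (m : ℕ) (k : Fin r → ℕ) :
    Nat.multinomial Finset.univ (Fin.cons m k)
      = (m + ∑ i, k i).choose m * Nat.multinomial Finset.univ k := by
  obtain ⟨q, hq⟩ := Nat.prod_factorial_dvd_factorial_sum Finset.univ k
  rw [Nat.multinomial, Nat.multinomial, Fin.sum_univ_succ, Fin.prod_univ_succ, Fin.cons_zero]
  simp only [Fin.cons_succ]
  rw [hq, Nat.mul_div_cancel_left _ (by positivity)]
  have key : (m + ∑ i, k i).factorial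
      = ((m + ∑ i, k i).choose m * q) * (m.factorial * ∏ i, (k i).factorial) := by
    rw [Nat.choose_symm_add, ← Nat.add_choose_mul_factorial_mul_factorial m (∑ i, k i), hq]
    ring
  rw [key, Nat.mul_div_cancel _ (by positivity)]

lemma compSet_one {n : ℕ} (hn : 1 ≤ n) : compSet 1 n = {![n]} := by
  rw [compSet, Finset.Nat.antidiagonalTuple_one, Finset.filter_singleton, if_pos]
  intro i
  fin_cases i
  simpa using hn

lemma inner_split (x s n : ℕ) (hs : 1 ≤ s) :
    ∑ k ∈ compSet (s + 1) n,
        Nat.multinomial Finset.univ k * x ^ headVal k * chainProd k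
    = ∑ m ∈ Icc 1 (n - 1), ∑ k' ∈ compSet s (n - m),
        n.choose m * x ^ m *
          (Nat.multinomial Finset.univ k' * m ^ headVal k' * chainProd k') := by
  rw [Finset.sum_sigma']
  apply Finset.sum_bij' (i := fun (k : Fin (s+1) → ℕ) _ =>
      (⟨k 0, Fin.tail k⟩ : Σ _m : ℕ, (Fin s → ℕ)))
    (j := fun p _ => Fin.cons p.1 p.2)
  · intro k hk
    rw [mem_compSet] at hk
    obtain ⟨hsum, hpos⟩ := hk
    rw [Fin.sum_univ_succ] at hsum
    have htsum : (s : ℕ) ≤ ∑ i : Fin s, k i.succ := by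
      calc (s : ℕ) = ∑ _i : Fin s, 1 := by simp
      _ ≤ _ := Finset.sum_le_sum (fun i _ => hpos i.succ)
    have h0 : 1 ≤ k 0 := hpos 0
    simp only [Finset.mem_sigma, Finset.mem_Icc, mem_compSet]
    refine ⟨⟨h0, by omega⟩, ?_, fun i => hpos i.succ⟩
    show ∑ i : Fin s, k i.succ = n - k 0
    omega
  · rintro ⟨m, k'⟩ hp
    simp only [Finset.mem_sigma, Finset.mem_Icc, mem_compSet] at hp
    obtain ⟨⟨hm1, hm2⟩, hsum, hpos⟩ := hp
    rw [mem_compSet, Fin.sum_univ_succ, Fin.cons_zero]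
    constructor
    · simp only [Fin.cons_succ]; omega
    · intro i
      refine Fin.cases ?_ ?_ i
      · simpa using hm1
      · intro j; simpa using hpos j
  · intro k _; exact Fin.cons_self_tail k
  · rintro ⟨m, k'⟩ _
    simp
  · intro k hk
    rw [mem_compSet] at hk
    obtain ⟨hsum, hpos⟩ := hk
    rw [Fin.sum_univ_succ] at hsum
    have hhead : headVal k = k 0 := by
      rw [headVal, dif_pos (Nat.succ_pos s)]
      congr
    conv_lhs => rw [hhead, ← Fin.cons_self_tail k]
    rw [multinomial_fin_cons, chainProd_cons, Fin.cons_zero]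
    have hts : k 0 + ∑ i, Fin.tail k i = n := hsum
    rw [hts]
    ring

lemma A_rec (x n : ℕ) (hn : 1 ≤ n) :
    A x n = x ^ n + ∑ m ∈ Icc 1 (n - 1), n.choose m * x ^ m * A m (n - m) := by
  have hsplit : Icc 1 n = insert 1 (Icc 2 n) := by
    ext a; simp only [Finset.mem_Icc, Finset.mem_insert]; omega
  rw [A, hsplit, Finset.sum_insert (by simp)]
  congr 1
  · rw [compSet_one hn, Finset.sum_singleton]
    have h1 : Nat.multinomial Finset.univ ![n] = 1 := by
      rw [show (Finset.univ : Finset (Fin 1)) = {0} from rfl]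
      exact Nat.multinomial_singleton _ _
    have h2 : chainProd ![n] = 1 := by
      rw [chainProd]
      apply Finset.prod_eq_one
      intro i _
      rw [dif_neg (by omega)]
    have h3 : headVal ![n] = n := by simp [headVal]
    rw [h1, h2, h3]; ring
  · have hre : ∑ r ∈ Icc 2 n, ∑ k ∈ compSet r n,
        Nat.multinomial Finset.univ k * x ^ headVal k * chainProd k
        = ∑ s ∈ Icc 1 (n - 1), ∑ k ∈ compSet (s + 1) n,
        Nat.multinomial Finset.univ k * x ^ headVal k * chainProd k := by
      apply Finset.sum_nbij' (i := fun r => r - 1) (j := fun s => s + 1)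
      · intro r hr; simp only [Finset.mem_Icc] at *; omega
      · intro s hs; simp only [Finset.mem_Icc] at *; omega
      · intro r hr; simp only [Finset.mem_Icc] at hr; omega
      · intro s hs; omega
      · intro r hr
        simp only [Finset.mem_Icc] at hr
        rw [show r - 1 + 1 = r by omega]
    rw [hre]
    have hre2 : ∀ s ∈ Icc 1 (n-1), ∑ k ∈ compSet (s + 1) n,
        Nat.multinomial Finset.univ k * x ^ headVal k * chainProd k
        = ∑ m ∈ Icc 1 (n - 1), n.choose m * x ^ m * ∑ k' ∈ compSet s (n - m),
          (Nat.multinomial Finset.univ k' * m ^ headVal k' * chainProd k') := by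
      intro s hs
      simp only [Finset.mem_Icc] at hs
      rw [inner_split x s n hs.1]
      apply Finset.sum_congr rfl
      intro m _
      rw [Finset.mul_sum]
    rw [Finset.sum_congr rfl hre2, Finset.sum_comm]
    apply Finset.sum_congr rfl
    intro m hm
    simp only [Finset.mem_Icc] at hm
    rw [← Finset.mul_sum, A]
    congr 1
    symm
    apply Finset.sum_subset
    · intro s hs
      simp only [Finset.mem_Icc] at *
      omega
    · intro s hs hns
      simp only [Finset.mem_Icc] at hs hns
      rw [compSet_empty (by omega), Finset.sum_empty]

lemma A_closed : ∀ n, 1 ≤ n → ∀ x, A x n = x * (x + n) ^ (n - 1) := by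
  intro n
  induction n using Nat.strong_induction_on with
  | _ n ih =>
    intro hn x
    rw [A_rec x n hn]
    have hterm : ∀ m ∈ Icc 1 (n - 1),
        n.choose m * x ^ m * A m (n - m)
          = n.choose m * x ^ m * (m * n ^ (n - m - 1)) := by
      intro m hm
      simp only [Finset.mem_Icc] at hm
      rw [ih (n - m) (by omega) (by omega) m, show m + (n - m) = n by omega]
    rw [Finset.sum_congr rfl hterm]
    obtain ⟨N, rfl⟩ : ∃ N, n = N + 1 := ⟨n - 1, by omega⟩
    simp only [show N + 1 - 1 = N from rfl]
    rw [← Finset.Ico_add_one_right_eq_Icc, Finset.sum_Ico_eq_sum_range]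
    simp only [show N + 1 - 1 = N from rfl]
    have hterm2 : ∀ j ∈ range N,
        (N + 1).choose (1 + j) * x ^ (1 + j) * ((1 + j) * (N + 1) ^ (N + 1 - (1 + j) - 1))
        = x * (x ^ j * (N + 1) ^ (N - j) * N.choose j) := by
      intro j hj
      rw [Finset.mem_range] at hj
      rw [show N + 1 - (1 + j) - 1 = N - j - 1 by omega,
        show (N + 1) ^ (N - j) = (N + 1) ^ (N - j - 1) * (N + 1) by
          rw [← pow_succ]; congr 1; omega,
        show 1 + j = j + 1 by omega]
      have h3 : (N + 1).choose (j + 1) * (j + 1) = (N + 1) * N.choose j :=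
        (Nat.add_one_mul_choose_eq N j).symm
      calc (N + 1).choose (j + 1) * x ^ (j + 1) * ((j + 1) * (N + 1) ^ (N - j - 1))
          = ((N + 1).choose (j + 1) * (j + 1)) * (x ^ (j + 1) * (N + 1) ^ (N - j - 1)) := by
            ring
        _ = ((N + 1) * N.choose j) * (x ^ (j + 1) * (N + 1) ^ (N - j - 1)) := by rw [h3]
        _ = _ := by ring
    rw [Finset.sum_congr rfl hterm2, add_pow, Finset.mul_sum, Finset.sum_range_succ,
      Nat.choose_self, Nat.sub_self, pow_zero]
    simp only [Nat.cast_id]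
    ring

theorem combinatorial_identity (n : ℕ) (hn : 1 ≤ n) :
    ∑ r ∈ Icc 1 n,
      ∑ k ∈ (Nat.antidiagonalTuple r n).filter (fun k => ∀ i, 1 ≤ k i),
        (n.factorial / ∏ i, (k i).factorial) * chainProd k
      = (n + 1) ^ (n - 1) := by
  have h1 : ∀ r ∈ Icc 1 n,
      ∑ k ∈ (Nat.antidiagonalTuple r n).filter (fun k => ∀ i, 1 ≤ k i),
        (n.factorial / ∏ i, (k i).factorial) * chainProd k
      = ∑ k ∈ compSet r n,
        Nat.multinomial Finset.univ k * 1 ^ headVal k * chainProd k := by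
    intro r _
    apply Finset.sum_congr rfl
    intro k hk
    have hk' : k ∈ compSet r n := hk
    rw [mem_compSet] at hk'
    rw [Nat.multinomial, hk'.1, one_pow, mul_one]
  rw [Finset.sum_congr rfl h1]
  have := A_closed n hn 1
  rw [A] at this
  rw [this, one_mul, add_comm]
end

section
/- For all positive integers n and k with k < n, we have n^{n-k-1} = ∑_{j=1}^{n-k} C(n-k, j) · j · k^{j-1} · (n-k)^{n-k-j-1}. -/
open Finset

theorem binomial_expansion_identity (n k : ℕ) (hk : 1 ≤ k) (hkn : k < n) :
    (n : ℝ) ^ ((n : ℤ) - k - 1)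
      = ∑ j ∈ Icc 1 (n - k),
          ((n - k).choose j : ℝ) * j * (k : ℝ) ^ (j - 1)
            * ((n : ℝ) - k) ^ ((n : ℤ) - k - j - 1) := by
  set m := n - k with hmdef
  have hm1 : 1 ≤ m := by omega
  have hn : n = k + m := by omega
  have hmR : (m : ℝ) ≠ 0 := Nat.cast_ne_zero.mpr (by omega)
  have hcast : (n : ℝ) = (k : ℝ) + m := by rw [hn]; push_cast; ring
  have hcastz : (n : ℤ) = (k : ℤ) + m := by rw [hn]; push_cast; ring
  rw [hcast, hcastz]
  have h1 : (k : ℝ) + m - k = m := by ring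
  have h2 : (k : ℤ) + m - k - 1 = (m : ℤ) - 1 := by ring
  rw [h1, h2]
  have h3 : ((m : ℤ) - 1) = ((m - 1 : ℕ) : ℤ) := by omega
  rw [h3, zpow_natCast, add_pow]
  have h4 : m - 1 + 1 = m := by omega
  rw [h4]
  refine Finset.sum_nbij' (fun i => i + 1) (fun j => j - 1) ?_ ?_ ?_ ?_ ?_
  · intro i hi
    simp only [mem_range] at hi
    simp only [mem_Icc]; omega
  · intro j hj
    simp only [mem_Icc] at hj
    simp only [mem_range]; omega
  · intro i hi; omega
  · intro j hj
    simp only [mem_Icc] at hj; omega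
  · intro i hi
    simp only [mem_range] at hi
    have hc : ((m.choose (i + 1) : ℝ)) * (i + 1) = (m : ℝ) * ((m - 1).choose i) := by
      have := Nat.add_one_mul_choose_eq (m - 1) i
      rw [show m - 1 + 1 = m by omega] at this
      exact_mod_cast this.symm
    have hp : ((m : ℝ)) ^ ((m : ℤ) - (↑(i + 1)) - 1) * m = (m : ℝ) ^ ((m - 1 - i : ℕ)) := by
      rw [show ((m : ℤ) - (↑(i + 1)) - 1) = ((m : ℤ) - i - 2) by push_cast; ring]
      rw [← zpow_natCast (m : ℝ) (m - 1 - i)]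
      rw [show ((m - 1 - i : ℕ) : ℤ) = (m : ℤ) - i - 2 + 1 by omega]
      rw [zpow_add₀ hmR, zpow_one]
    rw [show (i + 1) - 1 = i by omega]
    push_cast [hc]
    rw [← hp]
    push_cast
    ring
end

section
/- For every positive integer n and every s with 1 ≤ s ≤ n, (n+1)^{n-1} = ∑_{r=1}^{s} ∑_{k_1+...+k_r = n, k_i ≥ 1} n!/(k_1!...k_r!) · k_1^{k_2}...k_{r-1}^{k_r} + ∑_{k_1,...,k_s ≥ 1, k_1+...+k_s < n} n!/(k_1!...k_s!(n-k_1-...-k_s)!) · k_s · k_1^{k_2}...k_{s-1}^{k_s} · (n-k_1-...-k_{s-1})^{n-k_1-...-k_s-1}. -/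
open Finset

namespace IndStepAux

def F (r m : ℕ) : Finset (Fin r → ℕ) :=
  (Nat.antidiagonalTuple r m).filter (fun k => ∀ i, 1 ≤ k i)

lemma mem_F {r m : ℕ} {k : Fin r → ℕ} : k ∈ F r m ↔ (∑ i, k i = m) ∧ ∀ i, 1 ≤ k i := by
  simp [F, Finset.Nat.mem_antidiagonalTuple]

def Asum (n r : ℕ) : ℕ :=
  ∑ k ∈ F r n, (n.factorial / ∏ i, (k i).factorial) * chainProd k

def Bsum (n t : ℕ) : ℕ :=
  ∑ m ∈ Icc (t+1) (n - 1), ∑ k ∈ F (t+1) m,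
    (n.factorial / ((∏ i, (k i).factorial) * (n - m).factorial))
      * (k (Fin.last t) * chainProd k
          * (n - ∑ x ∈ univ.filter (fun x : Fin (t+1) => (x : ℕ) + 1 < t+1), k x) ^ (n - m - 1))

lemma key (x N : ℕ) (hN : 1 ≤ N) :
    x * (x + N) ^ (N - 1)
      = x ^ N + ∑ j ∈ Icc 1 (N - 1), N.choose j * (j * (x ^ j * N ^ (N - 1 - j))) := by
  obtain ⟨p, rfl⟩ : ∃ p, N = p + 1 := ⟨N - 1, by omega⟩
  simp only [Nat.add_sub_cancel]
  have h1 : ∑ j ∈ Icc 1 p, (p+1).choose j * (j * (x ^ j * (p+1) ^ (p - j)))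
      = ∑ i ∈ range p, (p+1).choose (i+1) * ((i+1) * (x ^ (i+1) * (p+1) ^ (p - (i+1)))) := by
    rw [show Icc 1 p = Ico 1 (p+1) by rfl, Finset.sum_Ico_eq_sum_range]
    simp only [Nat.add_sub_cancel]
    apply Finset.sum_congr rfl
    intro i _
    rw [add_comm 1 i]
  have h2 : ∀ i ∈ range p, (p+1).choose (i+1) * ((i+1) * (x ^ (i+1) * (p+1) ^ (p - (i+1))))
      = x * (x ^ i * (p+1) ^ (p - i) * (p.choose i)) := by
    intro i hi
    have hi' : i < p := mem_range.mp hi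
    have hc : (p+1).choose (i+1) * (i+1) = (p+1) * p.choose i := (Nat.add_one_mul_choose_eq p i).symm
    have hp : (p+1) ^ (p - i) = (p+1) * (p+1) ^ (p - (i+1)) := by
      rw [← pow_succ']
      congr 1
      omega
    calc (p+1).choose (i+1) * ((i+1) * (x ^ (i+1) * (p+1) ^ (p - (i+1))))
        = ((p+1).choose (i+1) * (i+1)) * (x ^ (i+1) * (p+1) ^ (p - (i+1))) := by ring
      _ = ((p+1) * p.choose i) * (x ^ (i+1) * (p+1) ^ (p - (i+1))) := by rw [hc]
      _ = x * (x ^ i * ((p+1) * (p+1) ^ (p - (i+1))) * (p.choose i)) := by ring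
      _ = x * (x ^ i * (p+1) ^ (p - i) * (p.choose i)) := by rw [← hp]
  rw [h1, Finset.sum_congr rfl h2, ← Finset.mul_sum, add_pow, Finset.sum_range_succ]
  simp only [Nat.sub_self, pow_zero, Nat.choose_self, mul_one, Nat.cast_id]
  rw [mul_add, ← pow_succ']
  exact (add_comm _ _)

lemma div_choose {n m j P : ℕ} (hP : P ∣ m.factorial) (hm : m ≤ n) (hj : j ≤ n - m) :
    n.factorial / (P * (n - m).factorial) * ((n - m).choose j)
      = n.factorial / (P * (j.factorial * (n - m - j).factorial)) := by
  have hD : P * (n - m).factorial ∣ n.factorial := by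
    have h1 : m.factorial * (n - m).factorial ∣ n.factorial := by
      have := Nat.factorial_mul_factorial_dvd_factorial_add m (n - m)
      rwa [show m + (n - m) = n by omega] at this
    exact dvd_trans (mul_dvd_mul_right hP _) h1
  have hD2 : j.factorial * (n - m - j).factorial ∣ (n - m).factorial := by
    have := Nat.factorial_mul_factorial_dvd_factorial_add j (n - m - j)
    rwa [show j + (n - m - j) = n - m by omega] at this
  rw [Nat.choose_eq_factorial_div_factorial hj, Nat.div_mul_div_comm hD hD2,
    show P * (n - m).factorial * (j.factorial * (n - m - j).factorial)
        = P * (j.factorial * (n - m - j).factorial) * (n - m).factorial by ring]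
  exact Nat.mul_div_mul_right _ _ (Nat.factorial_pos _)

lemma chainProd_succ {r : ℕ} (k : Fin (r+1) → ℕ) :
    chainProd k = ∏ j : Fin r, (k j.castSucc) ^ (k j.succ) := by
  unfold chainProd
  rw [Fin.prod_univ_castSucc]
  rw [dif_neg (by simp), mul_one]
  apply Finset.prod_congr rfl
  intro l _
  rw [dif_pos (by simpa using l.is_lt)]
  rfl

lemma chainProd_snoc {t : ℕ} (k : Fin (t+1) → ℕ) (c : ℕ) :
    chainProd (Fin.snoc k c : Fin (t+2) → ℕ) = chainProd k * (k (Fin.last t)) ^ c := by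
  rw [chainProd_succ, chainProd_succ, Fin.prod_univ_castSucc]
  rw [Fin.succ_last, Fin.snoc_last, Fin.snoc_castSucc]
  congr 1
  apply Finset.prod_congr rfl
  intro l _
  rw [Fin.snoc_castSucc, Fin.succ_castSucc, Fin.snoc_castSucc]

lemma sum_filter_chain {t : ℕ} (k : Fin (t+1) → ℕ) :
    ∑ x ∈ univ.filter (fun x : Fin (t+1) => (x : ℕ) + 1 < t+1), k x
      = ∑ l : Fin t, k l.castSucc := by
  rw [Finset.sum_filter, Fin.sum_univ_castSucc]
  simp [Fin.is_lt]

lemma snoc_sum {t : ℕ} (k : Fin (t+1) → ℕ) (c : ℕ) :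
    ∑ i, (Fin.snoc k c : Fin (t+2) → ℕ) i = (∑ i, k i) + c := by
  rw [Fin.sum_univ_castSucc]
  simp

lemma snoc_prod_fact {t : ℕ} (k : Fin (t+1) → ℕ) (c : ℕ) :
    ∏ i, ((Fin.snoc k c : Fin (t+2) → ℕ) i).factorial
      = (∏ i, (k i).factorial) * c.factorial := by
  rw [Fin.prod_univ_castSucc]
  simp

lemma snoc_pos {t : ℕ} {k : Fin (t+1) → ℕ} {c : ℕ} (hk : ∀ i, 1 ≤ k i) (hc : 1 ≤ c) :
    ∀ i, 1 ≤ (Fin.snoc k c : Fin (t+2) → ℕ) i := by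
  intro i
  refine Fin.lastCases ?_ ?_ i
  · simpa using hc
  · intro l; simpa using hk l

lemma sum_pos_ge {t : ℕ} {k : Fin (t+1) → ℕ} (hk : ∀ i, 1 ≤ k i) : t + 1 ≤ ∑ i, k i := by
  calc t + 1 = ∑ _i : Fin (t+1), 1 := by simp
    _ ≤ ∑ i, k i := Finset.sum_le_sum (fun i _ => hk i)

lemma Apart (n t : ℕ) (h : t + 2 ≤ n) :
    ∑ m ∈ Icc (t+1) (n-1), ∑ k ∈ F (t+1) m,
        n.factorial / ((∏ i, (k i).factorial) * (n - m).factorial)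
          * (chainProd k * (k (Fin.last t)) ^ (n - m))
      = Asum n (t+2) := by
  rw [Finset.sum_sigma', Asum]
  refine Finset.sum_bij' (fun a _ => (Fin.snoc a.2 (n - a.1) : Fin (t+2) → ℕ))
    (fun k _ => ⟨∑ l : Fin (t+1), k l.castSucc, Fin.init k⟩) ?_ ?_ ?_ ?_ ?_
  · rintro ⟨m, k⟩ ha
    obtain ⟨hm, hk⟩ := Finset.mem_sigma.mp ha
    have hm' : m ∈ Icc (t+1) (n-1) := hm
    have hk' : k ∈ F (t+1) m := hk
    obtain ⟨hm1, hm2⟩ := Finset.mem_Icc.mp hm'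
    obtain ⟨hsum, hpos⟩ := mem_F.mp hk'
    show (Fin.snoc k (n - m) : Fin (t+2) → ℕ) ∈ F (t+2) n
    refine mem_F.mpr ⟨?_, snoc_pos hpos (by omega)⟩
    rw [snoc_sum, hsum]
    omega
  · intro k hk
    obtain ⟨hsum, hpos⟩ := mem_F.mp hk
    have hS : (∑ l : Fin (t+1), k l.castSucc) + k (Fin.last (t+1)) = n := by
      rw [← Fin.sum_univ_castSucc]; exact hsum
    have hge : t + 1 ≤ ∑ l : Fin (t+1), k l.castSucc := sum_pos_ge (fun l => hpos l.castSucc)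
    have hlast := hpos (Fin.last (t+1))
    show (⟨∑ l : Fin (t+1), k l.castSucc, Fin.init k⟩ : Σ _m : ℕ, Fin (t+1) → ℕ)
        ∈ (Icc (t+1) (n-1)).sigma (fun m => F (t+1) m)
    exact Finset.mem_sigma.mpr ⟨Finset.mem_Icc.mpr ⟨hge, by dsimp only; omega⟩,
      mem_F.mpr ⟨rfl, fun l => hpos l.castSucc⟩⟩
  · rintro ⟨m, k⟩ ha
    obtain ⟨hm, hk⟩ := Finset.mem_sigma.mp ha
    have hk' : k ∈ F (t+1) m := hk
    obtain ⟨hsum, hpos⟩ := mem_F.mp hk'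
    show (⟨∑ l : Fin (t+1), (Fin.snoc k (n - m) : Fin (t+2) → ℕ) l.castSucc,
        Fin.init (Fin.snoc k (n - m) : Fin (t+2) → ℕ)⟩ : Σ _m : ℕ, Fin (t+1) → ℕ) = ⟨m, k⟩
    have h1 : (∑ l : Fin (t+1), (Fin.snoc k (n - m) : Fin (t+2) → ℕ) l.castSucc) = m := by
      simp [Fin.snoc_castSucc, hsum]
    have h2 : Fin.init (Fin.snoc k (n - m) : Fin (t+2) → ℕ) = k := Fin.init_snoc _ _
    rw [h1, h2]
  · intro k hk
    obtain ⟨hsum, hpos⟩ := mem_F.mp hk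
    have hS : (∑ l : Fin (t+1), k l.castSucc) + k (Fin.last (t+1)) = n := by
      rw [← Fin.sum_univ_castSucc]; exact hsum
    show (Fin.snoc (Fin.init k) (n - ∑ l : Fin (t+1), k l.castSucc) : Fin (t+2) → ℕ) = k
    have hlast := hpos (Fin.last (t+1))
    have e : n - (∑ l : Fin (t+1), k l.castSucc) = k (Fin.last (t+1)) := by omega
    rw [e]
    exact Fin.snoc_init_self k
  · rintro ⟨m, k⟩ ha
    show n.factorial / ((∏ i, (k i).factorial) * (n - m).factorial)
          * (chainProd k * (k (Fin.last t)) ^ (n - m))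
        = n.factorial / (∏ i, ((Fin.snoc k (n - m) : Fin (t+2) → ℕ) i).factorial)
          * chainProd (Fin.snoc k (n - m) : Fin (t+2) → ℕ)
    rw [snoc_prod_fact, chainProd_snoc]

lemma Bpart (n t : ℕ) (h : t + 2 ≤ n) :
    ∑ m ∈ Icc (t+1) (n-1), ∑ k ∈ F (t+1) m, ∑ j ∈ Icc 1 (n - m - 1),
        n.factorial / ((∏ i, (k i).factorial) * (j.factorial * (n - m - j).factorial))
          * (chainProd k * (j * ((k (Fin.last t)) ^ j * (n - m) ^ (n - m - 1 - j))))
      = Bsum n (t+1) := by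
  have inner : ∀ m ∈ Icc (t+1) (n-1), ∑ k ∈ F (t+1) m, ∑ j ∈ Icc 1 (n - m - 1),
        n.factorial / ((∏ i, (k i).factorial) * (j.factorial * (n - m - j).factorial))
          * (chainProd k * (j * ((k (Fin.last t)) ^ j * (n - m) ^ (n - m - 1 - j))))
      = ∑ x ∈ (F (t+1) m).sigma (fun _ => Icc 1 (n - m - 1)),
        n.factorial / ((∏ i, (x.1 i).factorial) * (x.2.factorial * (n - m - x.2).factorial))
          * (chainProd x.1 * (x.2 * ((x.1 (Fin.last t)) ^ x.2 * (n - m) ^ (n - m - 1 - x.2)))) := by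
    intro m _
    rw [Finset.sum_sigma']
  rw [Finset.sum_congr rfl inner, Finset.sum_sigma', Bsum, Finset.sum_sigma']
  refine Finset.sum_bij' (fun a _ => (⟨a.1 + a.2.2, Fin.snoc a.2.1 a.2.2⟩ :
      Σ _m : ℕ, Fin (t+2) → ℕ))
    (fun b _ => ⟨∑ l : Fin (t+1), b.2 l.castSucc, ⟨Fin.init b.2, b.2 (Fin.last (t+1))⟩⟩)
    ?_ ?_ ?_ ?_ ?_
  · rintro ⟨m, k, j⟩ ha
    obtain ⟨hm, hkj⟩ := Finset.mem_sigma.mp ha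
    obtain ⟨hk, hj⟩ := Finset.mem_sigma.mp hkj
    have hm' : m ∈ Icc (t+1) (n-1) := hm
    have hk' : k ∈ F (t+1) m := hk
    have hj' : j ∈ Icc 1 (n - m - 1) := hj
    obtain ⟨hm1, hm2⟩ := Finset.mem_Icc.mp hm'
    obtain ⟨hj1, hj2⟩ := Finset.mem_Icc.mp hj'
    obtain ⟨hsum, hpos⟩ := mem_F.mp hk'
    show (⟨m + j, Fin.snoc k j⟩ : Σ _m : ℕ, Fin (t+2) → ℕ)
        ∈ (Icc (t+1+1) (n-1)).sigma (fun m => F (t+1+1) m)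
    refine Finset.mem_sigma.mpr ⟨Finset.mem_Icc.mpr ⟨by dsimp only; omega, by dsimp only; omega⟩,
      mem_F.mpr ⟨?_, snoc_pos hpos (by omega)⟩⟩
    rw [snoc_sum, hsum]
  · rintro ⟨m, k⟩ hb
    obtain ⟨hm, hk⟩ := Finset.mem_sigma.mp hb
    have hm' : m ∈ Icc (t+1+1) (n-1) := hm
    have hk' : k ∈ F (t+1+1) m := hk
    obtain ⟨hm1, hm2⟩ := Finset.mem_Icc.mp hm'
    obtain ⟨hsum, hpos⟩ := mem_F.mp hk'
    have hS : (∑ l : Fin (t+1), k l.castSucc) + k (Fin.last (t+1)) = m := by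
      rw [← Fin.sum_univ_castSucc]; exact hsum
    have hge : t + 1 ≤ ∑ l : Fin (t+1), k l.castSucc := sum_pos_ge (fun l => hpos l.castSucc)
    have hlast := hpos (Fin.last (t+1))
    show (⟨∑ l : Fin (t+1), k l.castSucc, ⟨Fin.init k, k (Fin.last (t+1))⟩⟩ :
        Σ _m : ℕ, Σ _k : Fin (t+1) → ℕ, ℕ)
      ∈ (Icc (t+1) (n-1)).sigma (fun m => (F (t+1) m).sigma (fun _ => Icc 1 (n - m - 1)))
    refine Finset.mem_sigma.mpr ⟨Finset.mem_Icc.mpr ⟨hge, by dsimp only; omega⟩,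
      Finset.mem_sigma.mpr ⟨mem_F.mpr ⟨rfl, fun l => hpos l.castSucc⟩,
        Finset.mem_Icc.mpr ⟨hlast, by dsimp only; omega⟩⟩⟩
  · rintro ⟨m, k, j⟩ ha
    obtain ⟨hm, hkj⟩ := Finset.mem_sigma.mp ha
    obtain ⟨hk, hj⟩ := Finset.mem_sigma.mp hkj
    have hk' : k ∈ F (t+1) m := hk
    obtain ⟨hsum, hpos⟩ := mem_F.mp hk'
    have h1 : (∑ l : Fin (t+1), (Fin.snoc k j : Fin (t+2) → ℕ) l.castSucc) = m := by
      simp [Fin.snoc_castSucc, hsum]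
    have h2 : (Fin.snoc k j : Fin (t+2) → ℕ) (Fin.last (t+1)) = j := Fin.snoc_last _ _
    show (⟨∑ l : Fin (t+1), (Fin.snoc k j : Fin (t+2) → ℕ) l.castSucc,
        ⟨Fin.init (Fin.snoc k j : Fin (t+2) → ℕ),
          (Fin.snoc k j : Fin (t+2) → ℕ) (Fin.last (t+1))⟩⟩ :
        Σ _m : ℕ, Σ _k : Fin (t+1) → ℕ, ℕ) = ⟨m, k, j⟩
    rw [h1, h2, Fin.init_snoc]
  · rintro ⟨m, k⟩ hb
    obtain ⟨hm, hk⟩ := Finset.mem_sigma.mp hb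
    have hk' : k ∈ F (t+1+1) m := hk
    obtain ⟨hsum, hpos⟩ := mem_F.mp hk'
    have hS : (∑ l : Fin (t+1), k l.castSucc) + k (Fin.last (t+1)) = m := by
      rw [← Fin.sum_univ_castSucc]; exact hsum
    show (⟨(∑ l : Fin (t+1), k l.castSucc) + k (Fin.last (t+1)),
        Fin.snoc (Fin.init k) (k (Fin.last (t+1)))⟩ : Σ _m : ℕ, Fin (t+2) → ℕ) = ⟨m, k⟩
    rw [hS, Fin.snoc_init_self]
  · rintro ⟨m, k, j⟩ ha
    obtain ⟨hm, hkj⟩ := Finset.mem_sigma.mp ha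
    obtain ⟨hk, hj⟩ := Finset.mem_sigma.mp hkj
    have hm' : m ∈ Icc (t+1) (n-1) := hm
    have hk' : k ∈ F (t+1) m := hk
    have hj' : j ∈ Icc 1 (n - m - 1) := hj
    obtain ⟨hm1, hm2⟩ := Finset.mem_Icc.mp hm'
    obtain ⟨hj1, hj2⟩ := Finset.mem_Icc.mp hj'
    obtain ⟨hsum, hpos⟩ := mem_F.mp hk'
    have e1 : n - (m + j) = n - m - j := by omega
    have e2 : n - m - j - 1 = n - m - 1 - j := by omega
    have e3 : (∑ x ∈ univ.filter (fun x : Fin (t+2) => (x : ℕ) + 1 < t+2),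
        (Fin.snoc k j : Fin (t+2) → ℕ) x) = m := by
      rw [sum_filter_chain]
      simp [Fin.snoc_castSucc, hsum]
    show n.factorial / ((∏ i, (k i).factorial) * (j.factorial * (n - m - j).factorial))
          * (chainProd k * (j * ((k (Fin.last t)) ^ j * (n - m) ^ (n - m - 1 - j))))
        = n.factorial / ((∏ i, ((Fin.snoc k j : Fin (t+2) → ℕ) i).factorial)
            * (n - (m + j)).factorial)
          * ((Fin.snoc k j : Fin (t+2) → ℕ) (Fin.last (t+1))
            * chainProd (Fin.snoc k j : Fin (t+2) → ℕ)
            * (n - ∑ x ∈ univ.filter (fun x : Fin (t+2) => (x : ℕ) + 1 < t+2),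
                (Fin.snoc k j : Fin (t+2) → ℕ) x) ^ (n - (m + j) - 1))
    rw [snoc_prod_fact, chainProd_snoc, e3, e1, e2, Fin.snoc_last]
    rw [mul_assoc (∏ i, (k i).factorial)]
    ring

lemma Bsplit (n t : ℕ) (h : t + 2 ≤ n) : Bsum n t = Asum n (t+2) + Bsum n (t+1) := by
  rw [← Apart n t h, ← Bpart n t h, Bsum, ← Finset.sum_add_distrib]
  apply Finset.sum_congr rfl
  intro m hm
  rw [← Finset.sum_add_distrib]
  apply Finset.sum_congr rfl
  intro k hk
  obtain ⟨hm1, hm2⟩ := Finset.mem_Icc.mp hm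
  obtain ⟨hsum, hpos⟩ := mem_F.mp hk
  have hn1 : 1 ≤ n := by omega
  have hN : 1 ≤ n - m := by omega
  have hxm : k (Fin.last t) ≤ m := hsum ▸ Finset.single_le_sum (f := k) (fun i _ => Nat.zero_le _) (mem_univ _)
  have hS : (∑ l : Fin t, k l.castSucc) + k (Fin.last t) = m := by
    rw [← Fin.sum_univ_castSucc]; exact hsum
  have hbase : n - ∑ x ∈ univ.filter (fun x : Fin (t+1) => (x : ℕ) + 1 < t+1), k x
      = k (Fin.last t) + (n - m) := by
    rw [sum_filter_chain]
    omega
  rw [hbase]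
  have hP : (∏ i, (k i).factorial) ∣ m.factorial := by
    have := Nat.prod_factorial_dvd_factorial_sum univ k
    rwa [hsum] at this
  set x := k (Fin.last t) with hx
  set P := ∏ i, (k i).factorial with hPdef
  have expand : x * chainProd k * (x + (n - m)) ^ (n - m - 1)
      = chainProd k * (x * (x + (n - m)) ^ (n - m - 1)) := by ring
  rw [expand, key x (n - m) hN, mul_add, Nat.mul_add (n.factorial / (P * (n - m).factorial)),
    Finset.mul_sum, Finset.mul_sum]
  refine congrArg₂ (· + ·) rfl ?_
  apply Finset.sum_congr rfl
  intro j hj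
  obtain ⟨hj1, hj2⟩ := Finset.mem_Icc.mp hj
  have hjle : j ≤ n - m := by omega
  calc n.factorial / (P * (n - m).factorial)
        * (chainProd k * ((n - m).choose j * (j * (x ^ j * (n - m) ^ (n - m - 1 - j)))))
      = (n.factorial / (P * (n - m).factorial) * ((n - m).choose j))
          * (chainProd k * (j * (x ^ j * (n - m) ^ (n - m - 1 - j)))) := by ring
    _ = n.factorial / (P * (j.factorial * (n - m - j).factorial))
          * (chainProd k * (j * (x ^ j * (n - m) ^ (n - m - 1 - j)))) := by
            rw [div_choose hP (by omega) hjle]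

lemma base (n : ℕ) (hn : 1 ≤ n) : (n + 1) ^ (n - 1) = Asum n 1 + Bsum n 0 := by
  have hF : ∀ m : ℕ, 1 ≤ m → F 1 m = {![m]} := by
    intro m hm
    rw [F, Finset.Nat.antidiagonalTuple_one, Finset.filter_singleton, if_pos]
    intro i
    fin_cases i
    simpa using hm
  have hc : ∀ m : ℕ, chainProd (![m] : Fin 1 → ℕ) = 1 := by
    intro m
    unfold chainProd
    rw [Fin.prod_univ_one]
    simp
  have hA : Asum n 1 = 1 := by
    rw [Asum, hF n hn, Finset.sum_singleton, hc, mul_one]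
    have hp : (∏ i : Fin 1, ((![n] : Fin 1 → ℕ) i).factorial) = n.factorial := by simp
    rw [hp, Nat.div_self n.factorial_pos]
  have hB : Bsum n 0 = ∑ m ∈ Icc 1 (n-1),
      n.factorial / (m.factorial * (n - m).factorial) * (m * n ^ (n - m - 1)) := by
    rw [Bsum]
    apply Finset.sum_congr rfl
    intro m hm
    obtain ⟨hm1, hm2⟩ := Finset.mem_Icc.mp hm
    rw [hF m hm1, Finset.sum_singleton, hc]
    have hp : (∏ i : Fin 1, ((![m] : Fin 1 → ℕ) i).factorial) = m.factorial := by simp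
    have hfil : (univ.filter (fun x : Fin 1 => (x : ℕ) + 1 < 0 + 1)) = ∅ := by
      apply Finset.filter_false_of_mem
      intro x _
      omega
    rw [hp, hfil]
    have hk : (![m] : Fin 1 → ℕ) (Fin.last 0) = m := rfl
    rw [hk]
    simp
  rw [hA, hB]
  have hkey := key 1 n hn
  simp only [one_mul, one_pow] at hkey
  rw [show n + 1 = 1 + n by omega, hkey]
  congr 1
  apply Finset.sum_congr rfl
  intro j hj
  obtain ⟨hj1, hj2⟩ := Finset.mem_Icc.mp hj
  rw [Nat.choose_eq_factorial_div_factorial (show j ≤ n by omega),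
    show n - 1 - j = n - j - 1 by omega]

lemma main (n t : ℕ) (hn : 1 ≤ n) (h : t + 1 ≤ n) :
    (n + 1) ^ (n - 1) = (∑ r ∈ Icc 1 (t+1), Asum n r) + Bsum n t := by
  induction t with
  | zero => simpa using base n hn
  | succ u ih =>
    rw [Finset.sum_Icc_succ_top (by omega : 1 ≤ u + 1 + 1), add_assoc,
      ← Bsplit n u (by omega)]
    exact ih (by omega)

end IndStepAux

open IndStepAux in
theorem induction_step (n s : ℕ) (hn : 1 ≤ n) (hs : 1 ≤ s) (hsn : s ≤ n) :
    (n + 1) ^ (n - 1)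
      = (∑ r ∈ Icc 1 s,
          ∑ k ∈ (Nat.antidiagonalTuple r n).filter (fun k => ∀ i, 1 ≤ k i),
            (n.factorial / ∏ i, (k i).factorial) * chainProd k)
        + ∑ m ∈ Icc s (n - 1),
            ∑ k ∈ (Nat.antidiagonalTuple s m).filter (fun k => ∀ i, 1 ≤ k i),
              (n.factorial / ((∏ i, (k i).factorial) * (n - m).factorial))
                * (k ⟨s - 1, by omega⟩ * chainProd k
                  * (n - ∑ t ∈ univ.filter (fun t : Fin s => (t : ℕ) + 1 < s), k t)
                      ^ (n - m - 1)) := by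
  obtain ⟨t, rfl⟩ : ∃ t, s = t + 1 := ⟨s - 1, by omega⟩
  exact main n t hn hsn
end

section
/- For every integer N ≥ 1 and every real x with 0 ≤ x < 1/N, ∑_{a=0}^{N} (a+1)^{a-1} · C(N,a) · x^a · (1-(a+1)x)^{N-a} = 1. -/
open Finset

lemma fwdDiff_pow_eq_zero : ∀ k m : ℕ, k < m →
    (fwdDiff 1)^[m] (fun a : ℕ ↦ ((a : ℝ) + 1) ^ k) = 0 := by
  intro k
  induction k using Nat.strong_induction_on with
  | _ k IH =>
    intro m hm
    obtain ⟨m', rfl⟩ : ∃ m', m = m' + 1 := ⟨m - 1, by omega⟩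
    rw [Function.iterate_succ_apply]
    have hΔ : fwdDiff 1 (fun a : ℕ ↦ ((a : ℝ) + 1) ^ k)
        = ∑ j ∈ range k, (k.choose j : ℝ) • (fun a : ℕ ↦ ((a : ℝ) + 1) ^ j) := by
      funext a
      have hb := add_pow ((a : ℝ) + 1) 1 k
      simp only [one_pow, mul_one] at hb
      rw [Finset.sum_range_succ, Nat.choose_self, Nat.cast_one, mul_one] at hb
      simp only [fwdDiff, Finset.sum_apply, Pi.smul_apply, smul_eq_mul]
      push_cast
      rw [hb, add_sub_cancel_right]
      exact Finset.sum_congr rfl fun j _ => by ring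
    rw [hΔ, fwdDiff_iter_finset_sum]
    refine Finset.sum_eq_zero fun j hj => ?_
    have hj' : j < k := Finset.mem_range.mp hj
    rw [fwdDiff_iter_const_smul, IH j hj' m' (by omega), smul_zero]

lemma alt_sum_zero (m k : ℕ) (hk : k < m) :
    ∑ a ∈ range (m + 1), (-1 : ℝ) ^ (m - a) * (m.choose a) * ((a : ℝ) + 1) ^ k = 0 := by
  have h := fwdDiff_iter_eq_sum_shift (1 : ℕ) (fun a : ℕ ↦ ((a : ℝ) + 1) ^ k) m 0
  rw [fwdDiff_pow_eq_zero k m hk] at h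
  simp only [Pi.zero_apply, zero_add, smul_eq_mul, mul_one, zsmul_eq_mul, Int.cast_mul,
    Int.cast_pow, Int.cast_neg, Int.cast_one, Int.cast_natCast] at h
  rw [h]

lemma triangle_sum (n : ℕ) (f : ℕ → ℕ → ℝ) :
    ∑ a ∈ range (n + 1), ∑ b ∈ range (n + 1 - a), f a b
      = ∑ m ∈ range (n + 1), ∑ a ∈ range (m + 1), f a (m - a) := by
  rw [Finset.sum_sigma', Finset.sum_sigma']
  refine Finset.sum_nbij' (fun x ↦ ⟨x.1 + x.2, x.1⟩) (fun x ↦ ⟨x.2, x.1 - x.2⟩) ?_ ?_ ?_ ?_ ?_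
  · rintro ⟨a, b⟩ hx
    simp only [Finset.mem_sigma, Finset.mem_range] at hx ⊢
    omega
  · rintro ⟨m, a⟩ hx
    simp only [Finset.mem_sigma, Finset.mem_range] at hx ⊢
    omega
  · rintro ⟨a, b⟩ hx
    simp
  · rintro ⟨m, a⟩ hx
    simp only [Finset.mem_sigma, Finset.mem_range] at hx
    have h1 : a + (m - a) = m := by omega
    simp [h1]
  · rintro ⟨a, b⟩ hx
    simp [Nat.add_sub_cancel_left]

lemma term_eq (N m a : ℕ) (hm : m ≤ N) (ha : a ≤ m) (x : ℝ) :
    (((a + 1) ^ (a - 1) : ℕ) : ℝ) * (N.choose a : ℝ) * ((N - a).choose (m - a) : ℝ)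
        * (-1) ^ (m - a) * ((a : ℝ) + 1) ^ (m - a) * x ^ (a + (m - a))
      = (N.choose m : ℝ) * x ^ m
          * ((-1) ^ (m - a) * (m.choose a : ℝ) * ((a : ℝ) + 1) ^ (m - 1)) := by
  have h1 : a + (m - a) = m := by omega
  have h2 : (N.choose a : ℝ) * ((N - a).choose (m - a) : ℝ)
      = (N.choose m : ℝ) * (m.choose a : ℝ) := by
    exact_mod_cast congrArg (Nat.cast : ℕ → ℝ) (Nat.choose_mul (n := N) ha).symm
  have h3 : (((a + 1) ^ (a - 1) : ℕ) : ℝ) * ((a : ℝ) + 1) ^ (m - a)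
      = ((a : ℝ) + 1) ^ (m - 1) := by
    push_cast
    rcases Nat.eq_zero_or_pos a with rfl | hpos
    · simp
    · rw [← pow_add]; congr 1; omega
  rw [h1, show (((a + 1) ^ (a - 1) : ℕ) : ℝ) * (N.choose a : ℝ) * ((N - a).choose (m - a) : ℝ)
        * (-1) ^ (m - a) * ((a : ℝ) + 1) ^ (m - a) * x ^ m
      = ((N.choose a : ℝ) * ((N - a).choose (m - a) : ℝ))
        * ((((a + 1) ^ (a - 1) : ℕ) : ℝ) * ((a : ℝ) + 1) ^ (m - a))
        * ((-1) ^ (m - a) * x ^ m) by ring, h2, h3]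
  ring

theorem avalanche_polynomial_identity (N : ℕ) (hN : 1 ≤ N) (x : ℝ)
    (hx0 : 0 ≤ x) (hx : x < 1 / N) :
    ∑ a ∈ range (N + 1),
        (((a + 1) ^ (a - 1) : ℕ) : ℝ) * (N.choose a : ℝ) * x ^ a
          * (1 - ((a : ℝ) + 1) * x) ^ (N - a)
      = 1 := by
  have step1 : ∑ a ∈ range (N + 1),
        (((a + 1) ^ (a - 1) : ℕ) : ℝ) * (N.choose a : ℝ) * x ^ a
          * (1 - ((a : ℝ) + 1) * x) ^ (N - a)
      = ∑ a ∈ range (N + 1), ∑ b ∈ range (N + 1 - a),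
          (((a + 1) ^ (a - 1) : ℕ) : ℝ) * (N.choose a : ℝ) * ((N - a).choose b : ℝ)
            * (-1) ^ b * ((a : ℝ) + 1) ^ b * x ^ (a + b) := by
    refine Finset.sum_congr rfl fun a ha => ?_
    have ha' : a ≤ N := by simpa using Nat.lt_succ_iff.mp (Finset.mem_range.mp ha)
    have hb : (1 - ((a : ℝ) + 1) * x) ^ (N - a)
        = ∑ b ∈ range (N - a + 1),
            (-(((a : ℝ) + 1) * x)) ^ b * 1 ^ (N - a - b) * ((N - a).choose b : ℝ) := by
      rw [← add_pow]; ring_nf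
    rw [hb, Finset.mul_sum, show N + 1 - a = N - a + 1 by omega]
    refine Finset.sum_congr rfl fun b _ => ?_
    rw [neg_pow, mul_pow, pow_add]
    ring
  rw [step1, triangle_sum]
  rw [Finset.sum_eq_single_of_mem 0 (Finset.mem_range.mpr (by omega))]
  · simp
  · intro m hm hm0
    have hmN : m ≤ N := by simpa using Nat.lt_succ_iff.mp (Finset.mem_range.mp hm)
    have : ∑ a ∈ range (m + 1),
          (((a + 1) ^ (a - 1) : ℕ) : ℝ) * (N.choose a : ℝ) * ((N - a).choose (m - a) : ℝ)
            * (-1) ^ (m - a) * ((a : ℝ) + 1) ^ (m - a) * x ^ (a + (m - a))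
        = (N.choose m : ℝ) * x ^ m * ∑ a ∈ range (m + 1),
            (-1) ^ (m - a) * (m.choose a : ℝ) * ((a : ℝ) + 1) ^ (m - 1) := by
      rw [Finset.mul_sum]
      exact Finset.sum_congr rfl fun a ha =>
        term_eq N m a hmN (Nat.lt_succ_iff.mp (Finset.mem_range.mp ha)) x
    rw [this, alt_sum_zero m (m - 1) (by omega), mul_zero]
end

section
/- For every integer N ≥ 1 and real p with 0 ≤ p < 1/N, the quantities p_k = (1-Np)/(1-(N-1)p) · k^{k-2} · C(N-1,k-1) · p^{k-1} · (1-kp)^{N-k-1}, for k = 1,...,N, sum to 1; equivalently ∑_{k=1}^{N} k^{k-2} C(N-1,k-1) p^{k-1} (1-kp)^{N-k-1} = (1-(N-1)p)/(1-Np). -/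
open Finset

lemma findiff (m : ℕ) : ∀ j < m, ∀ x : ℝ, ∑ k ∈ range (m+1), (-1:ℝ)^k * (m.choose k) * (x+k)^j = 0 := by
  induction m with
  | zero => intro j hj; omega
  | succ m ih =>
    intro j hj x
    set F := fun k : ℕ => (-1:ℝ)^k * (m.choose k) * (x+(k:ℝ))^j with hF
    set G := fun k : ℕ => (-1:ℝ)^k * (m.choose k) * (x+(k:ℝ)+1)^j with hG
    have h0 : ∀ k : ℕ, (-1:ℝ)^(k+1) * ((m+1).choose (k+1)) * (x+((k+1:ℕ):ℝ))^j = F (k+1) - G k := by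
      intro k
      simp only [hF, hG, Nat.choose_succ_succ]
      push_cast
      ring
    have key : ∑ k ∈ range (m+1+1), (-1:ℝ)^k * ((m+1).choose k) * (x+k)^j
        = ∑ k ∈ range (m+1), (F k - G k) := by
      rw [Finset.sum_range_succ' (fun k => (-1:ℝ)^k * ((m+1).choose k) * (x+(k:ℝ))^j)]
      rw [Finset.sum_congr rfl (fun k _ => h0 k), Finset.sum_sub_distrib, Finset.sum_sub_distrib]
      have e1 : ∑ k ∈ range (m+1), F (k+1) = ∑ k ∈ range (m+1), F k - F 0 + F (m+1) := by
        have t1 := Finset.sum_range_succ' F (m+1)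
        have t2 := Finset.sum_range_succ F (m+1)
        rw [t2] at t1
        linarith
      have e2 : F (m+1) = 0 := by
        simp [hF, Nat.choose_eq_zero_of_lt]
      have e3 : ((-1:ℝ))^0 * ((m+1).choose 0) * (x+((0:ℕ):ℝ))^j = F 0 := by
        simp [hF]
      rw [e1, e2, e3]
      ring
    rw [key]
    have hFG : ∀ k ∈ range (m+1), F k - G k
        = ∑ i ∈ range j, -((-1:ℝ)^k * (m.choose k) * ((x+(k:ℝ))^i * (j.choose i))) := by
      intro k _
      have hb : (x+(k:ℝ)+1)^j = ∑ i ∈ range (j+1), (x+(k:ℝ))^i * 1^(j-i) * (j.choose i) :=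
        add_pow (x+(k:ℝ)) 1 j
      rw [Finset.sum_range_succ] at hb
      simp only [one_pow, mul_one, Nat.choose_self, Nat.cast_one] at hb
      rw [hF, hG]
      simp only
      rw [hb, mul_add, Finset.mul_sum, Finset.sum_neg_distrib]
      ring
    rw [Finset.sum_congr rfl hFG, Finset.sum_comm]
    apply Finset.sum_eq_zero
    intro i hi
    have hi' : i < m := lt_of_lt_of_le (mem_range.mp hi) (by omega)
    calc ∑ k ∈ range (m+1), -((-1:ℝ)^k * (m.choose k) * ((x+(k:ℝ))^i * (j.choose i)))
        = -((∑ k ∈ range (m+1), (-1:ℝ)^k * (m.choose k) * (x+(k:ℝ))^i) * (j.choose i)) := by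
          rw [Finset.sum_neg_distrib, Finset.sum_mul]
          congr 1
          exact Finset.sum_congr rfl (fun k _ => by ring)
      _ = 0 := by rw [ih i hi' x]; ring

lemma findiff' (m j : ℕ) (hj : j < m) (x : ℝ) :
    ∑ k ∈ range (m+1), (-1:ℝ)^k * (m.choose k) * (x+k)^j = 0 :=
  findiff m j hj x

lemma evalzero (m : ℕ) (hm : 1 ≤ m) (x : ℝ) :
    (-x)^m + ∑ k ∈ Icc 1 m, (m.choose k : ℝ) * x * (x+k)^(k-1) * (-(x+(k:ℝ)))^(m-k) = 0 := by
  have key : ∀ k : ℕ, 1 ≤ k → (m.choose k : ℝ) * x * (x+(k:ℝ))^(k-1) * (-(x+(k:ℝ)))^(m-k)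
      = (-1:ℝ)^m * x * ((-1:ℝ)^k * (m.choose k) * (x+(k:ℝ))^(m-1)) ∨ m < k := by
    intro k h1
    rcases Nat.lt_or_ge m k with h | hk
    · right; exact h
    left
    have e1 : (-(x+(k:ℝ)))^(m-k) = (-1:ℝ)^(m-k) * (x+(k:ℝ))^(m-k) := by
      rw [neg_pow]
    have e2 : (x+(k:ℝ))^(k-1) * (x+(k:ℝ))^(m-k) = (x+(k:ℝ))^(m-1) := by
      rw [← pow_add]; congr 1; omega
    have e3 : (-1:ℝ)^(m-k) = (-1:ℝ)^m * (-1:ℝ)^k := by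
      have h5 : ((-1:ℝ))^m = (-1:ℝ)^(m-k) * (-1:ℝ)^k := by
        rw [← pow_add]; congr 1; omega
      have h4 : ((-1:ℝ))^k * (-1:ℝ)^k = 1 := by rw [← mul_pow]; norm_num
      rw [h5, mul_assoc, h4, mul_one]
    rw [e1]
    calc (m.choose k : ℝ) * x * (x+(k:ℝ))^(k-1) * ((-1:ℝ)^(m-k) * (x+(k:ℝ))^(m-k))
        = (-1:ℝ)^(m-k) * ((m.choose k : ℝ) * x) * ((x+(k:ℝ))^(k-1) * (x+(k:ℝ))^(m-k)) := by ring
      _ = (-1:ℝ)^(m-k) * ((m.choose k : ℝ) * x) * (x+(k:ℝ))^(m-1) := by rw [e2]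
      _ = (-1:ℝ)^m * x * ((-1:ℝ)^k * (m.choose k) * (x+(k:ℝ))^(m-1)) := by rw [e3]; ring
  have conv1 : ∑ k ∈ Icc 1 m, (m.choose k : ℝ) * x * (x+k)^(k-1) * (-(x+(k:ℝ)))^(m-k)
      = ∑ k ∈ Icc 1 m, (-1:ℝ)^m * x * ((-1:ℝ)^k * (m.choose k) * (x+(k:ℝ))^(m-1)) := by
    apply Finset.sum_congr rfl
    intro k hk
    rw [Finset.mem_Icc] at hk
    rcases key k hk.1 with h | h
    · exact h
    · omega
  rw [conv1]
  have conv2 : (-x)^m = (-1:ℝ)^m * x * ((-1:ℝ)^0 * (m.choose 0) * (x+((0:ℕ):ℝ))^(m-1)) := by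
    simp only [pow_zero, Nat.choose_zero_right, Nat.cast_one, Nat.cast_zero, add_zero, one_mul]
    rw [neg_pow, mul_assoc]
    congr 1
    rw [← pow_succ']
    congr 1
    omega
  rw [conv2, ← Finset.mul_sum]
  have hzero : ((-1:ℝ)^0 * ((m.choose 0):ℝ) * (x+((0:ℕ):ℝ))^(m-1))
      + ∑ k ∈ Icc 1 m, (-1:ℝ)^k * (m.choose k) * (x+(k:ℝ))^(m-1) = 0 := by
    have hins : range (m+1) = insert 0 (Icc 1 m) := by
      ext a; simp only [Finset.mem_range, Finset.mem_insert, Finset.mem_Icc]; omega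
    have h := findiff' m (m-1) (by omega) x
    rw [hins, Finset.sum_insert (by simp)] at h
    linarith
  have factored : (-1:ℝ)^m * x * ((-1:ℝ)^0 * ((m.choose 0):ℝ) * (x+((0:ℕ):ℝ))^(m-1))
      + (-1:ℝ)^m * x * (∑ k ∈ Icc 1 m, (-1:ℝ)^k * (m.choose k) * (x+(k:ℝ))^(m-1))
      = (-1:ℝ)^m * x * (((-1:ℝ)^0 * ((m.choose 0):ℝ) * (x+((0:ℕ):ℝ))^(m-1))
        + ∑ k ∈ Icc 1 m, (-1:ℝ)^k * (m.choose k) * (x+(k:ℝ))^(m-1)) := by ring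
  rw [factored, hzero, mul_zero]


open Polynomial in
lemma polyAbel (n : ℕ) : ∀ x : ℝ,
    ((X + C (n:ℝ))^n
      + ∑ k ∈ Icc 1 n, C (((n.choose k):ℝ) * x * (x+(k:ℝ))^(k-1)) * (X + C ((n:ℝ)-(k:ℝ)))^(n-k)
      : Polynomial ℝ)
      = (X + C (x+(n:ℝ)))^n := by
  induction n with
  | zero => intro x; simp
  | succ n ih =>
    intro x
    set L : Polynomial ℝ := (X + C ((n+1:ℕ):ℝ))^(n+1)
      + ∑ k ∈ Icc 1 (n+1), C ((((n+1).choose k):ℝ) * x * (x+(k:ℝ))^(k-1)) * (X + C (((n+1:ℕ):ℝ)-(k:ℝ)))^(n+1-k) with hL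
    set R : Polynomial ℝ := (X + C (x+((n+1:ℕ):ℝ)))^(n+1) with hR
    show L = R
    have hIH : ((X + C ((n:ℝ)+1))^n
        + ∑ k ∈ Icc 1 n, C (((n.choose k):ℝ) * x * (x+(k:ℝ))^(k-1)) * (X + C (((n:ℝ)+1)-(k:ℝ)))^(n-k)
        : Polynomial ℝ) = (X + C (x+(n:ℝ)+1))^n := by
      have h2 := congrArg (fun q : Polynomial ℝ => q.comp (X + C 1)) (ih x)
      simp only [Polynomial.add_comp, Polynomial.pow_comp, Polynomial.mul_comp,
        Polynomial.X_comp, Polynomial.C_comp, Polynomial.sum_comp] at h2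
      have e : ∀ a : ℝ, (X : Polynomial ℝ) + C (1:ℝ) + C a = X + C (a + 1) := by
        intro a; rw [add_assoc, ← C_add, add_comm (1:ℝ) a]
      simp only [e] at h2
      have e2 : ∀ k : ℕ, ((n:ℝ) - (k:ℝ)) + 1 = ((n:ℝ)+1) - (k:ℝ) := fun k => by ring
      simp only [e2] at h2
      exact h2
    have hterm : ∀ k ∈ Icc 1 (n+1),
        derivative (C ((((n+1).choose k):ℝ) * x * (x+(k:ℝ))^(k-1)) * (X + C (((n+1:ℕ):ℝ)-(k:ℝ)))^(n+1-k))
        = C (((n+1:ℕ):ℝ)) * (C (((n.choose k):ℝ) * x * (x+(k:ℝ))^(k-1)) * (X + C (((n+1:ℕ):ℝ)-(k:ℝ)))^(n-k)) := by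
      intro k hk
      rw [Finset.mem_Icc] at hk
      rw [derivative_C_mul, derivative_X_add_C_pow]
      rcases Nat.lt_or_ge n k with h | h
      · have hk1 : k = n+1 := by omega
        subst hk1
        simp [Nat.choose_eq_zero_of_lt]
      · have e1 : n+1-k-1 = n-k := by omega
        have e2 : ((n+1).choose k) * ((n+1-k:ℕ)) = ((n+1:ℕ)) * (n.choose k) := by
          have t1 := Nat.choose_succ_right_eq (n+1) k
          have t2 := Nat.add_one_mul_choose_eq n k
          calc (n+1).choose k * (n+1-k) = (n+1).choose (k+1) * (k+1) := t1.symm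
            _ = (n+1) * n.choose k := by rw [← t2]
        rw [e1, ← mul_assoc, ← mul_assoc, ← C_mul, ← C_mul]
        congr 2
        calc (((n+1).choose k):ℝ) * x * (x+(k:ℝ))^(k-1) * ((n+1-k:ℕ):ℝ)
            = ((((n+1).choose k) * (n+1-k:ℕ) : ℕ):ℝ) * (x * (x+(k:ℝ))^(k-1)) := by push_cast; ring
          _ = ((((n+1:ℕ)) * (n.choose k) : ℕ):ℝ) * (x * (x+(k:ℝ))^(k-1)) := by rw [e2]
          _ = ((n+1:ℕ):ℝ) * (((n.choose k):ℝ) * x * (x+(k:ℝ))^(k-1)) := by push_cast; ring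
    have hdL : derivative L = C (((n+1:ℕ):ℝ)) * (X + C (x+(n:ℝ)+1))^n := by
      rw [hL, derivative_add, derivative_X_add_C_pow, derivative_sum,
        Finset.sum_congr rfl hterm, ← Finset.mul_sum, ← mul_add]
      congr 1
      rw [Finset.sum_Icc_succ_top (by omega : 1 ≤ n+1)]
      rw [show (n.choose (n+1) : ℝ) = 0 by simp [Nat.choose_eq_zero_of_lt]]
      simp only [zero_mul, map_zero]
      rw [add_zero, Nat.add_sub_cancel]
      simp only [Nat.cast_add, Nat.cast_one]
      exact hIH
    have hdR : derivative R = C (((n+1:ℕ):ℝ)) * (X + C (x+(n:ℝ)+1))^n := by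
      rw [hR, derivative_X_add_C_pow, Nat.add_sub_cancel]
      rw [show x+((n+1:ℕ):ℝ) = x+(n:ℝ)+1 by push_cast; ring]
    have hD : derivative (L - R) = 0 := by rw [derivative_sub, hdL, hdR, sub_self]
    have hc := Polynomial.eq_C_of_derivative_eq_zero hD
    set t : ℝ := -(x + ((n+1:ℕ):ℝ)) with ht
    have hevR : R.eval t = 0 := by
      rw [hR]
      simp only [eval_pow, eval_add, eval_X, eval_C]
      rw [show t + (x + ((n+1:ℕ):ℝ)) = 0 by rw [ht]; ring]
      exact zero_pow (by omega)
    have hevL : L.eval t = 0 := by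
      rw [hL]
      simp only [eval_add, eval_pow, eval_X, eval_C, eval_mul, eval_finset_sum]
      rw [show t + ((n+1:ℕ):ℝ) = -x by rw [ht]; ring]
      have e3 : ∀ k : ℕ, t + (((n+1:ℕ):ℝ) - (k:ℝ)) = -(x+(k:ℝ)) := fun k => by rw [ht]; ring
      simp only [e3]
      exact evalzero (n+1) (by omega) x
    have hc0 : (L - R).coeff 0 = 0 := by
      have h4 := congrArg (Polynomial.eval t) hc
      rw [Polynomial.eval_sub, hevL, hevR, Polynomial.eval_C] at h4
      simpa using h4.symm
    rw [hc0, map_zero] at hc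
    exact sub_eq_zero.mp hc

lemma abelReal (n : ℕ) (x y : ℝ) :
    (y+(n:ℝ))^n + ∑ k ∈ Icc 1 n, ((n.choose k):ℝ) * x * (x+(k:ℝ))^(k-1) * (y+((n:ℝ)-(k:ℝ)))^(n-k)
      = (x+y+(n:ℝ))^n := by
  have h := congrArg (Polynomial.eval y) (polyAbel n x)
  simp only [Polynomial.eval_add, Polynomial.eval_pow, Polynomial.eval_X, Polynomial.eval_C,
    Polynomial.eval_mul, Polynomial.eval_finset_sum] at h
  rw [show y + (x + (n:ℝ)) = x+y+(n:ℝ) by ring] at h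
  exact h

lemma hurwitz (n : ℕ) (hn : 1 ≤ n) (x y : ℝ) :
    y*(y+(n:ℝ))^(n-1) + x*(x+(n:ℝ))^(n-1)
      + ∑ k ∈ Icc 1 (n-1), ((n.choose k):ℝ) * x * (x+(k:ℝ))^(k-1) * y * (y+((n:ℝ)-(k:ℝ)))^(n-k-1)
    = (x+y)*(x+y+(n:ℝ))^(n-1) := by
  obtain ⟨m, rfl⟩ : ∃ m, n = m+1 := ⟨n-1, by omega⟩
  simp only [Nat.add_sub_cancel]
  simp only [show ∀ k : ℕ, m+1-k-1 = m-k from fun k => by omega]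
  have A1 := abelReal (m+1) x y
  have A2 := abelReal m x (y+1)
  rw [Finset.sum_Icc_succ_top (by omega : 1 ≤ m+1)] at A1
  simp only [Nat.choose_self, Nat.cast_one, one_mul, Nat.add_sub_cancel, Nat.sub_self,
    sub_self, pow_zero, mul_one] at A1
  simp only [Nat.cast_add, Nat.cast_one] at A1 ⊢
  have e4 : ∀ k : ℕ, (y+1)+((m:ℝ)-(k:ℝ)) = y+((m:ℝ)+1-(k:ℝ)) := fun k => by ring
  simp only [e4] at A2
  rw [show x+(y+1)+(m:ℝ) = x+y+((m:ℝ)+1) by ring, show (y+1)+(m:ℝ) = y+((m:ℝ)+1) by ring] at A2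
  have key : ∀ k ∈ Icc 1 m, ((m+1).choose k : ℝ) * x * (x+(k:ℝ))^(k-1) * y * (y+((m:ℝ)+1-(k:ℝ)))^(m-k)
      = ((m+1).choose k : ℝ) * x * (x+(k:ℝ))^(k-1) * (y+((m:ℝ)+1-(k:ℝ)))^(m+1-k)
        - ((m:ℝ)+1) * ((m.choose k : ℝ) * x * (x+(k:ℝ))^(k-1) * (y+((m:ℝ)+1-(k:ℝ)))^(m-k)) := by
    intro k hk
    rw [Finset.mem_Icc] at hk
    have hp : (y+((m:ℝ)+1-(k:ℝ)))^(m+1-k) = (y+((m:ℝ)+1-(k:ℝ))) * (y+((m:ℝ)+1-(k:ℝ)))^(m-k) := by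
      rw [show m+1-k = (m-k)+1 by omega, pow_succ]; ring
    have hnat : ((m+1)-k) * ((m+1).choose k) = (m+1) * m.choose k := by
      have t1 := Nat.choose_succ_right_eq (m+1) k
      have t2 := Nat.add_one_mul_choose_eq m k
      calc (m+1-k) * ((m+1).choose k) = (m+1).choose k * (m+1-k) := by ring
        _ = (m+1).choose (k+1) * (k+1) := t1.symm
        _ = (m+1) * m.choose k := by rw [← t2]
    have hc : ((m:ℝ)+1-(k:ℝ)) * (((m+1).choose k):ℝ) = ((m:ℝ)+1) * ((m.choose k):ℝ) := by
      have := congrArg (fun a : ℕ => (a : ℝ)) hnat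
      push_cast at this
      rw [Nat.cast_sub (by omega)] at this
      push_cast at this
      convert this using 2 <;> ring
    rw [hp]
    linear_combination (-(x * (x+(k:ℝ))^(k-1) * (y+((m:ℝ)+1-(k:ℝ)))^(m-k))) * hc
  rw [Finset.sum_congr rfl key, Finset.sum_sub_distrib, ← Finset.mul_sum]
  linear_combination A1 - ((m:ℝ)+1) * A2

theorem abelian_distribution_sums_to_one (N : ℕ) (hN : 1 ≤ N) (p : ℝ)
    (hp0 : 0 ≤ p) (hp : p < 1 / N) :
    ∑ k ∈ Icc 1 N,
        ((k ^ (k - 2) * (N - 1).choose (k - 1) : ℕ) : ℝ) * p ^ (k - 1)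
          * (1 - (k : ℝ) * p) ^ ((N : ℤ) - k - 1)
      = (1 - ((N : ℝ) - 1) * p) / (1 - (N : ℝ) * p) := by
  have hN0 : (0:ℝ) < N := by exact_mod_cast hN
  have hNp : (N:ℝ) * p < 1 := by
    have := (lt_div_iff₀ hN0).mp hp
    linarith
  have hNpne : 1 - (N:ℝ) * p ≠ 0 := by nlinarith
  rcases eq_or_lt_of_le hN with h1 | h2
  · -- N = 1
    obtain rfl : N = 1 := h1.symm
    rw [show Icc 1 1 = ({1} : Finset ℕ) from rfl, Finset.sum_singleton]
    norm_num at hNpne ⊢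
  rcases eq_or_lt_of_le hp0 with hp0' | hpp
  · -- p = 0
    obtain rfl : p = 0 := hp0'.symm
    rw [Finset.sum_eq_single 1]
    · norm_num
    · intro k hk hne
      rw [Finset.mem_Icc] at hk
      rw [zero_pow (by omega : k - 1 ≠ 0)]
      ring
    · intro h
      exact absurd (Finset.mem_Icc.mpr ⟨le_refl 1, hN⟩) h
  -- main case : N ≥ 2, p > 0
  obtain ⟨n, rfl⟩ : ∃ n, N = n+1 := ⟨N-1, by omega⟩
  have hn : 1 ≤ n := by omega
  have hpne : p ≠ 0 := ne_of_gt hpp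
  push_cast at hNp hNpne
  simp only [Nat.add_sub_cancel]
  set y : ℝ := 1/p - ((n:ℝ)+1) with hy
  have hy0 : 0 < y := by
    rw [hy]
    have : ((n:ℝ)+1) * p < 1 := by push_cast at hNp ⊢; linarith
    rw [sub_pos, lt_div_iff₀ hpp]
    linarith
  have hyne : y ≠ 0 := ne_of_gt hy0
  have hprod : ∀ k : ℕ, 1 - (k:ℝ) * p = p * (y + ((n:ℝ)+1 - (k:ℝ))) := by
    intro k
    rw [hy]
    field_simp
    ring
  have H := hurwitz n hn 1 y
  -- split the sum
  rw [Finset.sum_Icc_succ_top (by omega : 1 ≤ n+1)]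
  rw [show Icc 1 n = insert 1 (Icc 2 n) by ext a; simp [Finset.mem_Icc]; omega]
  rw [Finset.sum_insert (by simp)]
  have reidx : ∑ k ∈ Icc 2 n,
        ((k ^ (k - 2) * n.choose (k - 1) : ℕ) : ℝ) * p ^ (k - 1)
          * (1 - (k : ℝ) * p) ^ (((n+1:ℕ):ℤ) - k - 1)
      = ∑ j ∈ Icc 1 (n-1),
        (((j+1) ^ ((j+1) - 2) * n.choose ((j+1) - 1) : ℕ) : ℝ) * p ^ ((j+1) - 1)
          * (1 - ((j+1 : ℕ) : ℝ) * p) ^ (((n+1:ℕ):ℤ) - (j+1:ℕ) - 1) := by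
    rw [← Finset.Ico_add_one_right_eq_Icc, ← Finset.Ico_add_one_right_eq_Icc, Finset.sum_Ico_eq_sum_range,
      Finset.sum_Ico_eq_sum_range]
    rw [show n+1-2 = n-1 from by omega, show n-1+1-1 = n-1 from by omega]
    apply Finset.sum_congr rfl
    intro i _
    have e : 2 + i = 1 + i + 1 := by omega
    rw [e]
  rw [reidx]
  -- term k = 1
  have h1 : ((1 ^ (1 - 2) * n.choose (1 - 1) : ℕ) : ℝ) * p ^ (1 - 1)
      * (1 - ((1:ℕ) : ℝ) * p) ^ (((n+1:ℕ):ℤ) - ((1:ℕ):ℤ) - 1)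
      = (p^(n-1)/y) * (y*(y+(n:ℝ))^(n-1)) := by
    rw [show ((n+1:ℕ):ℤ) - ((1:ℕ):ℤ) - 1 = ((n-1 : ℕ) : ℤ) by push_cast [Nat.cast_sub hn]; ring,
      zpow_natCast]
    norm_num
    rw [show (1:ℝ) - p = p * (y + (n:ℝ)) by have h := hprod 1; push_cast at h ⊢; linear_combination h, mul_pow]
    field_simp
  -- term k = n+1
  have htop : (((n+1) ^ ((n+1) - 2) * n.choose ((n+1) - 1) : ℕ) : ℝ) * p ^ ((n+1) - 1)
      * (1 - ((n+1 : ℕ) : ℝ) * p) ^ (((n+1:ℕ):ℤ) - (n+1:ℕ) - 1)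
      = (p^(n-1)/y) * (1*(1+(n:ℝ))^(n-1)) := by
    rw [show ((n+1:ℕ):ℤ) - ((n+1:ℕ):ℤ) - 1 = (-1 : ℤ) by push_cast; ring, zpow_neg_one]
    rw [show (1:ℝ) - ((n+1:ℕ):ℝ) * p = p * y by have h := hprod (n+1); push_cast at h ⊢; linear_combination h]
    rw [show (n+1) - 2 = n - 1 from by omega, Nat.add_sub_cancel, Nat.choose_self]
    have ep : p^n = p^(n-1) * p := by rw [← pow_succ]; congr 1; omega
    push_cast
    rw [ep]
    field_simp
    ring
  -- middle terms
  have hmid : ∀ j ∈ Icc 1 (n-1),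
      (((j+1) ^ ((j+1) - 2) * n.choose ((j+1) - 1) : ℕ) : ℝ) * p ^ ((j+1) - 1)
          * (1 - ((j+1 : ℕ) : ℝ) * p) ^ (((n+1:ℕ):ℤ) - (j+1:ℕ) - 1)
      = (p^(n-1)/y) * ((n.choose j : ℝ) * 1 * (1+(j:ℝ))^(j-1) * y * (y+((n:ℝ)-(j:ℝ)))^(n-j-1)) := by
    intro j hj
    rw [Finset.mem_Icc] at hj
    rw [show ((n+1:ℕ):ℤ) - ((j+1:ℕ):ℤ) - 1 = ((n-j-1 : ℕ) : ℤ) by omega, zpow_natCast]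
    rw [show (1:ℝ) - ((j+1:ℕ):ℝ) * p = p * (y + ((n:ℝ)-(j:ℝ))) by
        have h := hprod (j+1); push_cast at h ⊢; linear_combination h]
    rw [mul_pow, show (j+1) - 2 = j - 1 from by omega, Nat.add_sub_cancel]
    push_cast
    have ep : p ^ j * p ^ (n-j-1) = p ^ (n-1) := by rw [← pow_add]; congr 1; omega
    have hr : p^(n-1)/y * ((n.choose j:ℝ) * 1 * (1+(j:ℝ))^(j-1) * y * (y+((n:ℝ)-(j:ℝ)))^(n-j-1))
        = p^(n-1) * ((n.choose j:ℝ) * (1+(j:ℝ))^(j-1) * (y+((n:ℝ)-(j:ℝ)))^(n-j-1)) := by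
      field_simp
    rw [hr]
    linear_combination ((n.choose j:ℝ) * (1+(j:ℝ))^(j-1) * (y+((n:ℝ)-(j:ℝ)))^(n-j-1)) * ep
  rw [h1, htop, Finset.sum_congr rfl hmid, ← Finset.mul_sum]
  rw [show ∀ a b c : ℝ, (p^(n-1)/y) * a + (p^(n-1)/y) * b + (p^(n-1)/y) * c
      = (p^(n-1)/y) * (a + c + b) from fun a b c => by ring]
  rw [H]
  rw [show (1:ℝ) + y + (n:ℝ) = 1/p by rw [hy]; ring]
  push_cast
  rw [show ((n:ℝ)+1-1) = (n:ℝ) by ring]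
  have e6 : p^(n-1) * ((1:ℝ)/p)^(n-1) = 1 := by
    rw [← mul_pow, mul_one_div_cancel hpne, one_pow]
  have ey : 1 - ((n:ℝ)+1)*p = p*y := by rw [hy]; field_simp
  have ex : 1 - (n:ℝ)*p = p*(1+y) := by rw [hy]; field_simp; ring
  calc p^(n-1)/y * ((1+y)*((1:ℝ)/p)^(n-1))
      = (p^(n-1) * ((1:ℝ)/p)^(n-1)) * ((1+y)/y) := by ring
    _ = (1+y)/y := by rw [e6, one_mul]
    _ = (p*(1+y))/(p*y) := (mul_div_mul_left _ _ hpne).symm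
    _ = (1 - (n:ℝ)*p)/(1 - ((n:ℝ)+1)*p) := by rw [← ey, ← ex]
end

section
/- For every integer N ≥ 1 and real p with 0 ≤ p < 1/N, ∑_{k=1}^{N} k · p_k = 1/(1-(N-1)p), where p_k = (1-Np)/(1-(N-1)p) · k^{k-2} · C(N-1,k-1) · p^{k-1} · (1-kp)^{N-k-1}; equivalently (1-Np) ∑_{k=1}^{N} k^{k-1} C(N-1,k-1) p^{k-1} (1-kp)^{N-k-1} = 1. -/
open Finset Polynomial

lemma alt_step (m : ℕ) (f : ℕ → ℝ) :
    ∑ k ∈ range (m+2), (-1:ℝ)^(m+1-k) * ((m+1).choose k) * f k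
      = ∑ k ∈ range (m+1), (-1:ℝ)^(m-k) * (m.choose k) * (f (k+1) - f k) := by
  rw [Finset.sum_range_succ'] -- peel k = 0
  have h1 : ∀ k ∈ range (m+1), (-1:ℝ)^(m+1-(k+1)) * ((m+1).choose (k+1)) * f (k+1)
      = (-1:ℝ)^(m-k) * (m.choose k) * f (k+1) + (-1:ℝ)^(m-k) * (m.choose (k+1)) * f (k+1) := by
    intro k hk
    have : m + 1 - (k+1) = m - k := by omega
    rw [this, Nat.choose_succ_succ]
    push_cast
    ring
  rw [Finset.sum_congr rfl h1, Finset.sum_add_distrib]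
  have h2 : ∑ k ∈ range (m+1), (-1:ℝ)^(m-k) * (m.choose (k+1)) * f (k+1)
      + (-1:ℝ)^(m+1-0) * ((m+1).choose 0) * f 0
      = - ∑ k ∈ range (m+1), (-1:ℝ)^(m-k) * (m.choose k) * f k := by
    rw [Finset.sum_range_succ' (fun k => (-1:ℝ)^(m-k) * (m.choose k) * f k)]
    rw [Finset.sum_range_succ (fun k => (-1:ℝ)^(m-k) * (m.choose (k+1)) * f (k+1))]
    rw [Nat.choose_succ_self]
    have h3 : ∀ k ∈ range m, (-1:ℝ)^(m-k) * (m.choose (k+1)) * f (k+1)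
        = - ((-1:ℝ)^(m-(k+1)) * (m.choose (k+1)) * f (k+1)) := by
      intro k hk
      simp only [mem_range] at hk
      have : m - k = (m - (k+1)) + 1 := by omega
      rw [this, pow_succ]
      ring
    rw [Finset.sum_congr rfl h3, Finset.sum_neg_distrib]
    have : m + 1 - 0 = m - 0 + 1 := by omega
    rw [this, pow_succ]
    simp [Nat.choose_zero_right]
    ring
  calc ∑ k ∈ range (m+1), ((-1:ℝ)^(m-k) * (m.choose k) * f (k+1))
        + ∑ k ∈ range (m+1), ((-1:ℝ)^(m-k) * (m.choose (k+1)) * f (k+1))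
        + (-1:ℝ)^(m+1-0) * ((m+1).choose 0) * f 0
      = ∑ k ∈ range (m+1), ((-1:ℝ)^(m-k) * (m.choose k) * f (k+1))
        - ∑ k ∈ range (m+1), (-1:ℝ)^(m-k) * (m.choose k) * f k := by
        rw [add_assoc, h2]; ring
    _ = _ := by rw [← Finset.sum_sub_distrib]; apply Finset.sum_congr rfl; intros; ring

lemma alt_pow : ∀ (j m : ℕ), j < m →
    ∑ k ∈ range (m+1), (-1:ℝ)^(m-k) * (m.choose k) * (k:ℝ)^j = 0 := by
  intro j
  induction j using Nat.strong_induction_on with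
  | _ j ih =>
    intro m hj
    obtain ⟨m', rfl⟩ : ∃ m', m = m' + 1 := ⟨m - 1, by omega⟩
    rw [alt_step m' (fun k => (k:ℝ)^j)]
    have hdiff : ∀ k : ℕ, ((k:ℝ)+1)^j - (k:ℝ)^j
        = ∑ i ∈ range j, (j.choose i) * (k:ℝ)^i := by
      intro k
      rw [add_pow (k:ℝ) 1 j]
      rw [Finset.sum_range_succ]
      simp only [one_pow, mul_one, Nat.choose_self, Nat.cast_one, Nat.sub_self, pow_zero]
      have : ∀ i ∈ range j, (k:ℝ)^i * (j.choose i) = (j.choose i) * (k:ℝ)^i := by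
        intro i _; ring
      rw [Finset.sum_congr rfl this]
      ring
    simp only [Nat.cast_add, Nat.cast_one] at hdiff ⊢
    calc ∑ k ∈ range (m'+1), (-1:ℝ)^(m'-k) * (m'.choose k) * (((k:ℝ)+1)^j - (k:ℝ)^j)
        = ∑ k ∈ range (m'+1), ∑ i ∈ range j,
            (j.choose i : ℝ) * ((-1:ℝ)^(m'-k) * (m'.choose k) * (k:ℝ)^i) := by
          apply Finset.sum_congr rfl; intro k _
          rw [hdiff k, Finset.mul_sum]
          apply Finset.sum_congr rfl; intro i _; ring
      _ = ∑ i ∈ range j, (j.choose i : ℝ) *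
            ∑ k ∈ range (m'+1), (-1:ℝ)^(m'-k) * (m'.choose k) * (k:ℝ)^i := by
          rw [Finset.sum_comm]
          apply Finset.sum_congr rfl; intro i _
          rw [Finset.mul_sum]
      _ = 0 := by
          apply Finset.sum_eq_zero; intro i hi
          simp only [mem_range] at hi
          rw [ih i hi m' (by omega), mul_zero]

lemma alt_shift (x z : ℝ) (n m : ℕ) (h : n < m) :
    ∑ k ∈ range (m+1), (-1:ℝ)^(m-k) * (m.choose k) * (x + k*z)^n = 0 := by
  calc ∑ k ∈ range (m+1), (-1:ℝ)^(m-k) * (m.choose k) * (x + k*z)^n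
      = ∑ k ∈ range (m+1), ∑ i ∈ range (n+1),
          x^i * z^(n-i) * (n.choose i) * ((-1:ℝ)^(m-k) * (m.choose k) * (k:ℝ)^(n-i)) := by
        apply Finset.sum_congr rfl; intro k _
        rw [add_pow x ((k:ℝ)*z) n, Finset.mul_sum]
        apply Finset.sum_congr rfl; intro i _
        rw [mul_pow]
        ring
    _ = ∑ i ∈ range (n+1), x^i * z^(n-i) * (n.choose i) *
          ∑ k ∈ range (m+1), ((-1:ℝ)^(m-k) * (m.choose k) * (k:ℝ)^(n-i)) := by
        rw [Finset.sum_comm]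
        apply Finset.sum_congr rfl; intro i _
        rw [Finset.mul_sum]
    _ = 0 := by
        apply Finset.sum_eq_zero; intro i hi
        rw [alt_pow (n-i) m (by omega), mul_zero]

lemma choose_succ_sub (n k : ℕ) : (n+1).choose k * (n+1-k) = (n+1) * n.choose k := by
  rcases le_or_gt k n with h | h
  · have h1 : (n+1).choose k = (n+1).choose (n+1-k) := (Nat.choose_symm (by omega)).symm
    have h2 : n+1-k = (n-k)+1 := by omega
    rw [h1, h2, ← Nat.add_one_mul_choose_eq, Nat.choose_symm h]
  · rcases Nat.lt_or_ge (n+1) k with h2 | h2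
    · rw [Nat.choose_eq_zero_of_lt h2, Nat.choose_eq_zero_of_lt (by omega)]
      simp
    · have : k = n+1 := by omega
      subst this
      simp [Nat.choose_eq_zero_of_lt (Nat.lt_succ_self n)]

noncomputable def abelP (x z w : ℝ) (n : ℕ) : Polynomial ℝ :=
  (X + C (w + n*z))^n
  + ∑ k ∈ Icc 1 n, C ((n.choose k : ℝ) * x * (x + k*z)^(k-1)) * (X + C (w + ((n:ℝ)-k)*z))^(n-k)

lemma abelP_eq (x z : ℝ) : ∀ (n : ℕ) (w : ℝ),
    abelP x z w n = (X + C (x + w + (n:ℝ)*z))^n := by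
  intro n
  induction n with
  | zero => intro w; simp [abelP]
  | succ n ih =>
    intro w
    have hder : derivative (abelP x z w (n+1)) = C (((n+1:ℕ):ℝ)) * abelP x z (w+z) n := by
      rw [abelP, abelP, derivative_add, derivative_sum, mul_add, Finset.mul_sum]
      rw [show Icc 1 (n+1) = insert (n+1) (Icc 1 n) from (Finset.insert_Icc_right_eq_Icc_add_one (by omega)).symm]
      rw [Finset.sum_insert (by simp), Nat.sub_self, pow_zero, mul_one, derivative_C, zero_add]
      congr 1
      · rw [derivative_X_add_C_pow, Nat.add_sub_cancel]
        have e2 : w + ((n+1:ℕ):ℝ)*z = (w+z) + (n:ℝ)*z := by push_cast; ring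
        rw [e2]
      · apply Finset.sum_congr rfl
        intro k hk
        simp only [mem_Icc] at hk
        rw [derivative_C_mul, derivative_X_add_C_pow]
        have he : n+1-k-1 = n-k := by omega
        have hw : w + ((((n+1:ℕ)):ℝ) - ((k:ℕ):ℝ))*z = (w + z) + (((n:ℝ))-((k:ℕ):ℝ))*z := by push_cast; ring
        rw [he, hw, ← mul_assoc, ← C_mul, ← mul_assoc, ← C_mul]
        congr 2
        have hc : (((n+1).choose k : ℕ) : ℝ) * ((n+1-k : ℕ) : ℝ) = (((n+1:ℕ)):ℝ) * ((n.choose k : ℕ):ℝ) := by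
          rw [← Nat.cast_mul, ← Nat.cast_mul, choose_succ_sub]
        push_cast at hc
        push_cast
        linear_combination hc * (x * (x + k*z)^(k-1))
    have key : derivative (abelP x z w (n+1) - (X + C (x + w + ((n+1:ℕ):ℝ)*z))^(n+1)) = 0 := by
      rw [derivative_sub, hder, ih (w+z), derivative_X_add_C_pow, Nat.add_sub_cancel, sub_eq_zero]
      have e3 : x + (w+z) + (n:ℝ)*z = x + w + ((n+1:ℕ):ℝ)*z := by push_cast; ring
      rw [e3]
    set t₀ : ℝ := -(x + w + ((n+1:ℕ):ℝ)*z) with ht₀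
    have halt : ∑ k ∈ range (n+2), (-1:ℝ)^(n+1-k) * (((n+1).choose k : ℕ):ℝ) * (x * (x+(k:ℝ)*z)^n) = 0 := by
      have h1 := alt_shift x z n (n+1) (by omega)
      have h2 : ∑ k ∈ range (n+2), (-1:ℝ)^(n+1-k) * (((n+1).choose k : ℕ):ℝ) * (x * (x+(k:ℝ)*z)^n)
          = x * ∑ k ∈ range (n+2), (-1:ℝ)^(n+1-k) * (((n+1).choose k : ℕ):ℝ) * (x+(k:ℝ)*z)^n := by
        rw [Finset.mul_sum]
        apply Finset.sum_congr rfl; intro k _; ring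
      rw [h2, h1, mul_zero]
    have hev : (abelP x z w (n+1) - (X + C (x + w + ((n+1:ℕ):ℝ)*z))^(n+1)).eval t₀ = 0 := by
      rw [eval_sub, eval_pow, eval_add, eval_X, eval_C, ht₀, neg_add_cancel, zero_pow (by omega), sub_zero]
      rw [abelP, eval_add, eval_pow, eval_add, eval_X, eval_C, eval_finset_sum]
      simp only [eval_mul, eval_pow, eval_add, eval_X, eval_C]
      rw [← halt, Finset.sum_range_succ']
      have hhead : (-(x + w + ((n+1:ℕ):ℝ)*z) + (w + ((n+1:ℕ):ℝ)*z))^(n+1)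
          = (-1:ℝ)^(n+1-0) * (((n+1).choose 0 : ℕ):ℝ) * (x * (x+((0:ℕ):ℝ)*z)^n) := by
        have e8 : -(x + w + ((n+1:ℕ):ℝ)*z) + (w + ((n+1:ℕ):ℝ)*z) = -x := by ring
        rw [e8, neg_pow]
        norm_num [pow_succ]
        ring
      have hsum : ∑ k ∈ Icc 1 (n+1), (((n+1).choose k : ℕ):ℝ) * x * (x + (k:ℝ)*z)^(k-1)
            * (-(x + w + ((n+1:ℕ):ℝ)*z) + (w + (((n+1:ℕ):ℝ) - (k:ℝ))*z))^(n+1-k)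
          = ∑ k ∈ range (n+1), (-1:ℝ)^(n+1-(k+1)) * (((n+1).choose (k+1) : ℕ):ℝ) * (x * (x+((k+1:ℕ):ℝ)*z)^n) := by
        rw [← Finset.Ico_add_one_right_eq_Icc, Finset.sum_Ico_eq_sum_range]
        apply Finset.sum_congr (by norm_num)
        intro k hk
        simp only [mem_range] at hk
        have hone : 1 + k = k + 1 := by omega
        rw [hone]
        have e4 : -(x + w + ((n+1:ℕ):ℝ)*z) + (w + (((n+1:ℕ):ℝ) - (((k+1:ℕ)):ℝ))*z) = -(x + ((k+1:ℕ):ℝ)*z) := by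
          push_cast; ring
        rw [e4]
        have e5 : (-(x + ((k+1:ℕ):ℝ)*z))^(n+1-(k+1)) = (-1:ℝ)^(n-k) * (x + ((k+1:ℕ):ℝ)*z)^(n-k) := by
          rw [neg_pow]
          congr 2 <;> omega
        rw [e5]
        have e6 : (x + ((k+1:ℕ):ℝ)*z)^(k+1-1) * (x + ((k+1:ℕ):ℝ)*z)^(n-k) = (x + ((k+1:ℕ):ℝ)*z)^n := by
          rw [← pow_add]
          congr 1
          omega
        have e7 : n+1-(k+1) = n-k := by omega
        push_cast [e7]
        push_cast at e6
        linear_combination ((-1:ℝ)^(n-k) * (((n+1).choose (k+1) : ℕ):ℝ) * x) * e6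
      rw [hhead, hsum]
      ring
    have hC := Polynomial.eq_C_of_derivative_eq_zero key
    rw [hC, eval_C] at hev
    rw [hev, map_zero, sub_eq_zero] at hC
    exact hC




lemma abel_real (x z y : ℝ) (n : ℕ) :
    (y + (n:ℝ)*z)^n + ∑ k ∈ Icc 1 n,
        ((n.choose k : ℕ):ℝ) * x * (x+(k:ℝ)*z)^(k-1) * (y + ((n:ℝ)-(k:ℝ))*z)^(n-k)
      = (x + y + (n:ℝ)*z)^n := by
  have h := congrArg (eval y) (abelP_eq x z n 0)
  simp only [abelP, eval_add, eval_pow, eval_X, eval_C, eval_finset_sum, eval_mul,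
    zero_add, add_zero] at h
  linear_combination h

theorem abelian_distribution_expectation (N : ℕ) (hN : 1 ≤ N) (p : ℝ)
    (hp0 : 0 ≤ p) (hp : p < 1 / N) :
    (1 - (N : ℝ) * p) *
        ∑ k ∈ Icc 1 N,
          ((k ^ (k - 1) * (N - 1).choose (k - 1) : ℕ) : ℝ) * p ^ (k - 1)
            * (1 - (k : ℝ) * p) ^ ((N : ℤ) - k - 1)
      = 1 := by
  obtain ⟨n, rfl⟩ : ∃ n, N = n + 1 := ⟨N - 1, by omega⟩
  have hNpos : (0:ℝ) < ((n+1:ℕ):ℝ) := by positivity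
  have hNp : ((n+1:ℕ):ℝ) * p < 1 := by
    have h1 := (lt_div_iff₀ hNpos).mp hp
    calc ((n+1:ℕ):ℝ) * p = p * ((n+1:ℕ):ℝ) := mul_comm _ _
      _ < 1 := h1
  have hq : (1:ℝ) - ((n+1:ℕ):ℝ) * p ≠ 0 := by linarith
  -- split off the k = n+1 term
  rw [show Icc 1 (n+1) = insert (n+1) (Icc 1 n) from (Finset.insert_Icc_right_eq_Icc_add_one (by omega)).symm]
  rw [Finset.sum_insert (by simp)]
  -- simplify the k = n+1 term
  have hlast : (((n+1) ^ ((n+1) - 1) * (n+1-1).choose ((n+1) - 1) : ℕ) : ℝ) * p ^ ((n+1) - 1)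
      * (1 - ((n+1:ℕ) : ℝ) * p) ^ (((n+1:ℕ) : ℤ) - (n+1:ℕ) - 1)
      = (((n+1:ℕ):ℝ))^n * p^n * (1 - ((n+1:ℕ):ℝ) * p)⁻¹ := by
    have e1 : (((n+1:ℕ) : ℤ) - (n+1:ℕ) - 1) = -1 := by push_cast; ring
    rw [e1, zpow_neg_one]
    simp only [Nat.add_sub_cancel, Nat.choose_self, mul_one, Nat.cast_pow]
  rw [hlast]
  -- convert zpow to pow in the remaining sum
  have hconv : ∀ k ∈ Icc 1 n,
      ((k ^ (k - 1) * (n+1-1).choose (k - 1) : ℕ) : ℝ) * p ^ (k - 1)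
        * (1 - (k : ℝ) * p) ^ (((n+1:ℕ) : ℤ) - k - 1)
      = ((k:ℝ) ^ (k - 1) * (n.choose (k-1) : ℕ)) * p ^ (k - 1) * (1 - (k : ℝ) * p) ^ (n - k) := by
    intro k hk
    simp only [mem_Icc] at hk
    have e2 : (((n+1:ℕ) : ℤ) - k - 1) = ((n - k : ℕ) : ℤ) := by push_cast [hk.2]; omega
    rw [e2, zpow_natCast]
    push_cast
    ring
  rw [Finset.sum_congr rfl hconv]
  -- use the Abel identity
  have habel := abel_real (1 - ((n+1:ℕ):ℝ)*p) p p n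
  have hx : (1 - ((n+1:ℕ):ℝ)*p) + p + (n:ℝ)*p = 1 := by push_cast; ring
  rw [hx, one_pow] at habel
  -- reindex our sum to match abel's
  have hre : ∑ k ∈ Icc 1 n,
        ((n.choose k : ℕ):ℝ) * (1 - ((n+1:ℕ):ℝ)*p) * ((1 - ((n+1:ℕ):ℝ)*p)+(k:ℝ)*p)^(k-1)
          * (p + ((n:ℝ)-(k:ℝ))*p)^(n-k)
      = ∑ k ∈ Icc 1 n, (1 - ((n+1:ℕ):ℝ)*p) *
          (((k:ℝ) ^ (k - 1) * (n.choose (k-1) : ℕ)) * p ^ (k - 1) * (1 - (k : ℝ) * p) ^ (n - k)) := by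
    apply Finset.sum_nbij' (i := fun k => n + 1 - k) (j := fun k => n + 1 - k)
    · intro a ha; simp only [mem_Icc] at *; omega
    · intro a ha; simp only [mem_Icc] at *; omega
    · intro a ha; simp only [mem_Icc] at ha; omega
    · intro a ha; simp only [mem_Icc] at ha; omega
    · intro k hk
      simp only [mem_Icc] at hk
      have hc : n.choose k = n.choose ((n+1-k) - 1) := by
        rw [show (n+1-k) - 1 = n - k by omega]
        exact (Nat.choose_symm hk.2).symm
      have e3 : ((1 - ((n+1:ℕ):ℝ)*p)+(k:ℝ)*p) = 1 - ((n+1-k:ℕ):ℝ)*p := by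
        rw [Nat.cast_sub (by omega : k ≤ n+1)]; push_cast; ring
      have e4 : (p + ((n:ℝ)-(k:ℝ))*p) = ((n+1-k:ℕ):ℝ)*p := by
        rw [Nat.cast_sub (by omega : k ≤ n+1)]; push_cast; ring
      have e5 : k - 1 = n - (n+1-k) := by omega
      have e6 : n - k = (n+1-k) - 1 := by omega
      rw [e3, e4, hc, e5, e6, mul_pow]
      ring
  have hsum : (1 - ((n+1:ℕ):ℝ) * p) * ∑ k ∈ Icc 1 n,
        ((k:ℝ) ^ (k - 1) * (n.choose (k-1) : ℕ)) * p ^ (k - 1) * (1 - (k : ℝ) * p) ^ (n - k)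
      = ∑ k ∈ Icc 1 n,
        ((n.choose k : ℕ):ℝ) * (1 - ((n+1:ℕ):ℝ)*p) * ((1 - ((n+1:ℕ):ℝ)*p)+(k:ℝ)*p)^(k-1)
          * (p + ((n:ℝ)-(k:ℝ))*p)^(n-k) := by
    rw [Finset.mul_sum]
    exact hre.symm
  have hlast2 : (1 - ((n+1:ℕ):ℝ) * p) * ((((n+1:ℕ):ℝ))^n * p^n * (1 - ((n+1:ℕ):ℝ) * p)⁻¹)
      = (p + (n:ℝ)*p)^n := by
    rw [show (p + (n:ℝ)*p) = ((n+1:ℕ):ℝ)*p by push_cast; ring, mul_pow]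
    rw [mul_comm ((1:ℝ) - ((n+1:ℕ):ℝ) * p) _, mul_assoc, inv_mul_cancel₀ hq, mul_one]
  rw [mul_add, hsum, hlast2]
  linarith [habel]
end

section
/- For every positive integer a, the sum over r from 1 to a and over all compositions (k_1,...,k_r) of a into positive parts of a!/(k_1!...k_r!) · ∏_{l=2}^{r} k_{l-1}^{k_l}, multiplied by C(N,a), equals (a+1)^{a-1} · C(N,a). -/
open Finset

def Fav : ℕ → ℕ → ℕ
  | _, 0 => 1
  | j, (m+1) => ∑ p ∈ Finset.range (m+1), (m+1).choose (p+1) * j^(p+1) * Fav (p+1) (m-p)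
  decreasing_by omega

lemma Fav_zero (j : ℕ) : Fav j 0 = 1 := by simp [Fav]

lemma Fav_succ (j m : ℕ) :
    Fav j (m+1) = ∑ p ∈ Finset.range (m+1), (m+1).choose (p+1) * j^(p+1) * Fav (p+1) (m-p) := by
  rw [Fav]

lemma Fav_eq : ∀ m j, Fav j (m+1) = j * (j + (m+1))^m := by
  intro m
  induction m using Nat.strong_induction_on with
  | _ m ih =>
    intro j
    rw [Fav_succ, Finset.sum_range_succ]
    have hlast : (m+1).choose (m+1) * j^(m+1) * Fav (m+1) (m-m) = j^(m+1) := by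
      simp [Fav_zero]
    rw [hlast]
    have hterm : ∀ p ∈ Finset.range m,
        (m+1).choose (p+1) * j^(p+1) * Fav (p+1) (m-p)
          = m.choose p * (j^p * (m+1)^(m-p)) * j := by
      intro p hp
      rw [Finset.mem_range] at hp
      have hF : Fav (p+1) (m-p) = (p+1) * (m+1)^(m-p-1) := by
        obtain ⟨q, hq⟩ : ∃ q, m - p = q + 1 := ⟨m-p-1, by omega⟩
        rw [hq, ih q (by omega)]
        rw [show p+1+(q+1) = m+1 by omega]
        simp
      rw [hF]
      have h2 : (m+1).choose (p+1) * (p+1) = (m+1) * m.choose p := by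
        rw [← Nat.add_one_mul_choose_eq]
      have h3 : (m+1) * (m+1)^(m-p-1) = (m+1)^(m-p) := by
        rw [← pow_succ']; congr 1; omega
      calc (m+1).choose (p+1) * j^(p+1) * ((p+1) * (m+1)^(m-p-1))
          = ((m+1).choose (p+1) * (p+1)) * ((m+1)^(m-p-1)) * j^(p+1) := by ring
        _ = ((m+1) * m.choose p) * (m+1)^(m-p-1) * j^(p+1) := by rw [h2]
        _ = m.choose p * ((m+1) * (m+1)^(m-p-1)) * j^(p+1) := by ring
        _ = m.choose p * (m+1)^(m-p) * j^(p+1) := by rw [h3]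
        _ = m.choose p * (j^p * (m+1)^(m-p)) * j := by ring
    rw [Finset.sum_congr rfl hterm]
    have hbin : (j + (m+1))^m = ∑ p ∈ Finset.range (m+1), j^p * (m+1)^(m-p) * m.choose p := by
      exact_mod_cast add_pow j (m+1) m
    have hl : j * (j ^ m * (m + 1) ^ (m - m) * m.choose m) = j ^ (m+1) := by
      simp [pow_succ, mul_comm]
    rw [hbin, Finset.sum_range_succ, Nat.mul_add, Finset.mul_sum, hl]
    congr 1
    apply Finset.sum_congr rfl; intro p hp; ring

lemma chainProd_cons_s10 {r : ℕ} (x : ℕ) (t : Fin r → ℕ) :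
    chainProd (Fin.cons x t) = (if h : 0 < r then x ^ t ⟨0, h⟩ else 1) * chainProd t := by
  rw [chainProd, Fin.prod_univ_succ]
  congr 1
  · by_cases h : 0 < r
    · rw [dif_pos (by simpa using Nat.succ_lt_succ h), dif_pos h]
      rfl
    · rw [dif_neg (by simpa using h), dif_neg h]
  · rw [chainProd]
    apply Finset.prod_congr rfl
    intro i _
    by_cases h : (i : ℕ) + 1 < r
    · rw [dif_pos (by simp; omega), dif_pos h]
      rfl
    · rw [dif_neg (by simp; omega), dif_neg h]

lemma multinomial_univ_cons {r : ℕ} (x : ℕ) (t : Fin r → ℕ) :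
    Nat.multinomial univ (Fin.cons x t) = (x + ∑ i, t i).choose x * Nat.multinomial univ t := by
  have hdvd := Nat.prod_factorial_dvd_factorial_sum univ t
  unfold Nat.multinomial
  rw [Fin.sum_univ_succ, Fin.prod_univ_succ, Fin.cons_zero]
  simp only [Fin.cons_succ]
  obtain ⟨c, hc⟩ := hdvd
  have hP : 0 < ∏ i : Fin r, (t i).factorial := Finset.prod_pos (fun i _ => Nat.factorial_pos _)
  rw [hc, Nat.mul_div_cancel_left c hP]
  have hfact : (x + ∑ i, t i).factorial
      = (x.factorial * ((∏ i : Fin r, (t i).factorial) * c)) * ((x + ∑ i, t i).choose x) := by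
    rw [← hc]
    have h := Nat.add_choose_mul_factorial_mul_factorial x (∑ i, t i)
    rw [← Nat.choose_symm_add] at h
    calc (x + ∑ i, t i).factorial = (x + ∑ i, t i).choose x * x.factorial * (∑ i, t i).factorial := h.symm
      _ = x.factorial * (∑ i, t i).factorial * (x + ∑ i, t i).choose x := by ring
  rw [hfact]
  have h2 : (x.factorial * ((∏ i : Fin r, (t i).factorial) * c)) * ((x + ∑ i, t i).choose x)
      = (x.factorial * ∏ i : Fin r, (t i).factorial) * ((x + ∑ i, t i).choose x * c) := by ring
  rw [h2, Nat.mul_div_cancel_left _ (by positivity)]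

def ATset (r m : ℕ) : Finset (Fin r → ℕ) :=
  (Nat.antidiagonalTuple r m).filter (fun k => ∀ i, 1 ≤ k i)

lemma ATset_empty {r m : ℕ} (h : m < r) : ATset r m = ∅ := by
  rw [ATset, Finset.filter_eq_empty_iff]
  intro k hk hpos
  rw [Finset.Nat.mem_antidiagonalTuple] at hk
  have : (r : ℕ) = ∑ i : Fin r, 1 := by simp
  have hler : r ≤ m := by
    rw [this, ← hk]
    exact Finset.sum_le_sum (fun i _ => hpos i)
  omega

lemma ATset_zero_pos {r : ℕ} (h : 0 < r) : ATset r 0 = ∅ := ATset_empty h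

lemma ATset_zero_zero : ATset 0 0 = {![]} := by
  rw [ATset, Nat.antidiagonalTuple_zero_zero]
  apply Finset.filter_true_of_mem
  intro k _ i
  exact absurd i.2 (by omega)

lemma ATset_zero_left_pos {m : ℕ} (h : 0 < m) : ATset 0 m = ∅ := by
  obtain ⟨m', rfl⟩ : ∃ m', m = m' + 1 := ⟨m - 1, by omega⟩
  rw [ATset, Nat.antidiagonalTuple_zero_succ]
  rfl

lemma ATset_split {r n : ℕ} (f : (Fin (r+1) → ℕ) → ℕ) :
    ∑ k ∈ ATset (r+1) n, f k = ∑ p ∈ Icc 1 n, ∑ t ∈ ATset r (n - p), f (Fin.cons p t) := by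
  rw [Finset.sum_sigma' (Icc 1 n) (fun p => ATset r (n - p)) (fun p t => f (Fin.cons p t))]
  apply Finset.sum_nbij' (i := fun k => (⟨k 0, Fin.tail k⟩ : Σ _ : ℕ, Fin r → ℕ))
    (j := fun p => Fin.cons p.1 p.2)
  · intro k hk
    rw [ATset, Finset.mem_filter, Finset.Nat.mem_antidiagonalTuple] at hk
    obtain ⟨hsum, hpos⟩ := hk
    rw [Fin.sum_univ_succ] at hsum
    rw [Finset.mem_sigma, Finset.mem_Icc, ATset, Finset.mem_filter,
      Finset.Nat.mem_antidiagonalTuple]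
    refine ⟨⟨hpos 0, by show k 0 ≤ n; omega⟩, ?_, fun i => hpos i.succ⟩
    have h0 : ((⟨k 0, Fin.tail k⟩ : Σ _ : ℕ, Fin r → ℕ)).fst = k 0 := rfl
    have h1 : ∑ i : Fin r, Fin.tail k i = ∑ i : Fin r, k i.succ := rfl
    show ∑ i : Fin r, Fin.tail k i = n - (⟨k 0, Fin.tail k⟩ : Σ _ : ℕ, Fin r → ℕ).fst
    rw [h0, h1]
    omega
  · intro p hp
    rw [Finset.mem_sigma, Finset.mem_Icc, ATset, Finset.mem_filter,
      Finset.Nat.mem_antidiagonalTuple] at hp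
    obtain ⟨⟨h1, h2⟩, hsum, hpos⟩ := hp
    rw [ATset, Finset.mem_filter, Finset.Nat.mem_antidiagonalTuple]
    constructor
    · rw [Fin.sum_univ_succ, Fin.cons_zero]
      simp only [Fin.cons_succ]
      omega
    · intro i
      refine Fin.cases ?_ ?_ i
      · simpa using h1
      · intro i'; simpa using hpos i'
  · intro k _
    exact Fin.cons_self_tail k
  · intro p _
    simp
  · intro k _
    rw [Fin.cons_self_tail]


def Gfun (j n : ℕ) : ℕ :=
  ∑ r ∈ range n, ∑ k ∈ ATset (r+1) n, Nat.multinomial univ k * j ^ (k 0) * chainProd k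

lemma Vsum (p n m : ℕ) (hm : m < n) :
    (∑ r ∈ range n, ∑ t ∈ ATset r m,
        Nat.multinomial univ t * (if h : 0 < r then p ^ t ⟨0, h⟩ else 1) * chainProd t)
      = if m = 0 then 1 else Gfun p m := by
  by_cases hm0 : m = 0
  · subst hm0
    rw [if_pos rfl]
    rw [Finset.sum_eq_single_of_mem 0 (Finset.mem_range.mpr (by omega))]
    · rw [ATset_zero_zero]
      simp [chainProd, Nat.multinomial]
    · intro r _ hr
      rw [ATset_zero_pos (Nat.pos_of_ne_zero hr), Finset.sum_empty]
  · rw [if_neg hm0]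
    obtain ⟨n', rfl⟩ : ∃ n', n = n' + 1 := ⟨n - 1, by omega⟩
    rw [Finset.sum_range_succ']
    have h0 : (∑ t ∈ ATset 0 m,
        Nat.multinomial univ t * (if h : 0 < 0 then p ^ t ⟨0, h⟩ else 1) * chainProd t) = 0 := by
      rw [ATset_zero_left_pos (by omega), Finset.sum_empty]
    rw [h0, add_zero]
    clear h0
    rw [Gfun]
    have key : ∀ (F : ℕ → ℕ), (∀ r, m ≤ r → F r = 0) →
        ∑ r ∈ range m, F r = ∑ r ∈ range n', F r := by
      intro F hF
      apply Finset.sum_subset (Finset.range_subset_range.mpr (show m ≤ n' by omega))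
      intro x _ hx
      exact hF x (by simp only [Finset.mem_range, not_lt] at hx; omega)
    have hv : ∀ r, m ≤ r → (∑ t ∈ ATset (r+1) m,
        Nat.multinomial univ t * (if h : 0 < r + 1 then p ^ t ⟨0, h⟩ else 1) * chainProd t) = 0 := by
      intro r hr
      rw [ATset_empty (by omega : m < r + 1), Finset.sum_empty]
    refine Eq.trans (key (fun r => ∑ t ∈ ATset (r+1) m,
        Nat.multinomial univ t * (if h : 0 < r + 1 then p ^ t ⟨0, h⟩ else 1) * chainProd t)
      hv).symm ?_
    apply Finset.sum_congr rfl
    intro r _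
    apply Finset.sum_congr rfl
    intro t _
    rw [dif_pos (Nat.succ_pos r)]
    rfl

lemma Gdec (j n : ℕ) (hn : 1 ≤ n) :
    Gfun j n = ∑ p ∈ Icc 1 n, n.choose p * j ^ p
      * (if n - p = 0 then 1 else Gfun p (n - p)) := by
  rw [Gfun]
  have hsplit : ∀ r ∈ range n,
      (∑ k ∈ ATset (r+1) n, Nat.multinomial univ k * j ^ (k 0) * chainProd k)
        = ∑ p ∈ Icc 1 n, ∑ t ∈ ATset r (n - p),
            Nat.multinomial univ (Fin.cons p t) * j ^ ((Fin.cons p t : Fin (r+1) → ℕ) 0)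
              * chainProd (Fin.cons p t) := by
    intro r _
    exact ATset_split _
  rw [Finset.sum_congr rfl hsplit, Finset.sum_comm]
  apply Finset.sum_congr rfl
  intro p hp
  rw [Finset.mem_Icc] at hp
  have hnp : n - p < n := by omega
  have hterm : ∀ r ∈ range n, ∀ t ∈ ATset r (n - p),
      Nat.multinomial univ (Fin.cons p t) * j ^ ((Fin.cons p t : Fin (r+1) → ℕ) 0)
          * chainProd (Fin.cons p t)
        = n.choose p * j ^ p *
            (Nat.multinomial univ t * (if h : 0 < r then p ^ t ⟨0, h⟩ else 1) * chainProd t) := by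
    intro r _ t ht
    have hsum : ∑ i, t i = n - p := by
      rw [ATset, Finset.mem_filter, Finset.Nat.mem_antidiagonalTuple] at ht
      exact ht.1
    rw [multinomial_univ_cons, chainProd_cons_s10, Fin.cons_zero, hsum,
      show p + (n - p) = n by omega]
    ring
  calc ∑ r ∈ range n, ∑ t ∈ ATset r (n - p),
          Nat.multinomial univ (Fin.cons p t) * j ^ ((Fin.cons p t : Fin (r+1) → ℕ) 0)
            * chainProd (Fin.cons p t)
      = ∑ r ∈ range n, ∑ t ∈ ATset r (n - p),
          n.choose p * j ^ p *
            (Nat.multinomial univ t * (if h : 0 < r then p ^ t ⟨0, h⟩ else 1) * chainProd t) := by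
        apply Finset.sum_congr rfl
        intro r hr
        exact Finset.sum_congr rfl (hterm r hr)
    _ = n.choose p * j ^ p * ∑ r ∈ range n, ∑ t ∈ ATset r (n - p),
          Nat.multinomial univ t * (if h : 0 < r then p ^ t ⟨0, h⟩ else 1) * chainProd t := by
        rw [Finset.mul_sum]
        apply Finset.sum_congr rfl
        intro r _
        rw [Finset.mul_sum]
    _ = n.choose p * j ^ p * (if n - p = 0 then 1 else Gfun p (n - p)) := by
        rw [Vsum p n (n - p) hnp]

lemma Icc_one_sum (n : ℕ) (f : ℕ → ℕ) : ∑ i ∈ Icc 1 n, f i = ∑ i ∈ range n, f (i+1) := by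
  rw [← Finset.Ico_add_one_right_eq_Icc, Finset.sum_Ico_eq_sum_range]
  simp [add_comm]

lemma Fav_succ' (j n : ℕ) (hn : 1 ≤ n) :
    Fav j n = ∑ p ∈ Icc 1 n, n.choose p * j ^ p * Fav p (n - p) := by
  obtain ⟨m, rfl⟩ : ∃ m, n = m + 1 := ⟨n - 1, by omega⟩
  rw [Icc_one_sum, Fav_succ]
  apply Finset.sum_congr rfl
  intro p _
  have h : m + 1 - (p + 1) = m - p := by omega
  rw [h]

lemma G_eq_Fav : ∀ n, 1 ≤ n → ∀ j, Gfun j n = Fav j n := by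
  intro n
  induction n using Nat.strong_induction_on with
  | _ n ih =>
    intro hn j
    rw [Gdec j n hn, Fav_succ' j n hn]
    apply Finset.sum_congr rfl
    intro p hp
    rw [Finset.mem_Icc] at hp
    by_cases h : n - p = 0
    · rw [if_pos h, h, Fav_zero]
    · rw [if_neg h, ih (n - p) (by omega) (by omega) p]

theorem avalanche_count_identity (N a : ℕ) (ha : 1 ≤ a) :
    (∑ r ∈ Icc 1 a,
        ∑ k ∈ (Nat.antidiagonalTuple r a).filter (fun k => ∀ i, 1 ≤ k i),
          (a.factorial / ∏ i, (k i).factorial) * chainProd k) * N.choose a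
      = (a + 1) ^ (a - 1) * N.choose a := by
  have h1 : (∑ r ∈ Icc 1 a,
        ∑ k ∈ (Nat.antidiagonalTuple r a).filter (fun k => ∀ i, 1 ≤ k i),
          (a.factorial / ∏ i, (k i).factorial) * chainProd k) = Gfun 1 a := by
    rw [Gfun, Icc_one_sum a (fun r => ∑ k ∈ (Nat.antidiagonalTuple r a).filter
        (fun k => ∀ i, 1 ≤ k i), (a.factorial / ∏ i, (k i).factorial) * chainProd k)]
    apply Finset.sum_congr rfl
    intro r _
    apply Finset.sum_congr rfl
    intro k hk
    rw [Finset.mem_filter, Finset.Nat.mem_antidiagonalTuple] at hk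
    have hmul : Nat.multinomial univ k = a.factorial / ∏ i, (k i).factorial := by
      rw [Nat.multinomial, hk.1]
    rw [hmul, one_pow, mul_one]
  rw [h1, G_eq_Fav a ha 1]
  clear h1
  obtain ⟨m, rfl⟩ : ∃ m, a = m + 1 := ⟨a - 1, by omega⟩
  rw [Fav_eq m 1, one_mul, show 1 + (m+1) = m+1+1 from by omega,
    show m+1-1 = m from by omega]
end

section
/- For every n ≥ 1, the number of rooted labeled trees on vertex set {0,1,...,n} with root 0 in which the set of vertices at distance l from the root has cardinality k_l for l = 1,...,r (with k_1 + ... + k_r = n, all k_l ≥ 1) equals n!/(k_1!...k_r!) · k_1^{k_2} k_2^{k_3} ... k_{r-1}^{k_r}. -/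
open Finset

namespace RootedTreeAux

/-! ### Generic counting of functions with prescribed fiber sizes -/

section FiberCount

variable {α β : Type*} [Fintype α] [Fintype β] [DecidableEq α] [DecidableEq β]

private lemma sigma_snd_cast {c : β → ℕ} :
    ∀ {x y : Σ b, Fin (c b)} (h : x = y) (pf : c x.1 = c y.1), Fin.cast pf x.2 = y.2 := by
  rintro x _ rfl _; rfl

/-- fiber equivalence extracted from a global equivalence -/
private def gEquiv (c : β → ℕ) (e : α ≃ Σ b, Fin (c b)) (b : β) :
    {a // (e a).1 = b} ≃ Fin (c b) where
  toFun x := Fin.cast (congrArg c x.2) (e x.1).2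
  invFun i := ⟨e.symm ⟨b, i⟩, by simp⟩
  left_inv x := by
    obtain ⟨a, h⟩ := x
    subst h
    apply Subtype.ext
    show e.symm ⟨(e a).1, Fin.cast _ (e a).2⟩ = a
    have : (⟨(e a).1, Fin.cast (congrArg c rfl) (e a).2⟩ : Σ b, Fin (c b)) = e a := rfl
    rw [this, Equiv.symm_apply_apply]
  right_inv i := by
    have h : e (e.symm ⟨b, i⟩) = ⟨b, i⟩ := Equiv.apply_symm_apply _ _
    exact sigma_snd_cast h _

private lemma card_fiber_fun (c : β → ℕ) (hc : ∑ b, c b = Fintype.card α) :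
    Nat.card {f : α → β // ∀ b, Nat.card {a // f a = b} = c b} * ∏ b, (c b).factorial
      = (Fintype.card α).factorial := by
  classical
  -- the map Ψ from global equivalences to (function, fiber orderings) pairs
  set T := Σ f : {f : α → β // ∀ b, Nat.card {a // f a = b} = c b},
      ∀ b : β, ({a // f.1 a = b} ≃ Fin (c b)) with hT
  have hcard_sigma : Fintype.card (Σ b, Fin (c b)) = Fintype.card α := by
    simp [Fintype.card_sigma, hc]
  have hΨ : Nat.card (α ≃ Σ b, Fin (c b)) = Nat.card T := by
    have hfib : ∀ (e : α ≃ Σ b, Fin (c b)) (b : β),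
        Nat.card {a // (e a).1 = b} = c b := fun e b => by
      rw [Nat.card_congr (gEquiv c e b)]; simp
    refine Nat.card_eq_of_bijective
      (fun e => (⟨⟨fun a => (e a).1, hfib e⟩, gEquiv c e⟩ : T)) ⟨?_, ?_⟩
    · -- injective via recovery of the underlying function
      intro e e' h
      have : (fun a => (⟨(e a).1, gEquiv c e (e a).1 ⟨a, rfl⟩⟩ : Σ b, Fin (c b)))
          = (fun a => (⟨(e' a).1, gEquiv c e' (e' a).1 ⟨a, rfl⟩⟩ : Σ b, Fin (c b))) := by
        have := congrArg (fun (t : T) => (fun a => (⟨t.1.1 a, t.2 (t.1.1 a) ⟨a, rfl⟩⟩ :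
          Σ b, Fin (c b)))) h
        exact this
      have he : ⇑e = ⇑e' := by
        funext a
        have ha := congrFun this a
        exact ha
      exact Equiv.coe_fn_injective he
    · -- surjective
      rintro ⟨⟨f, hf⟩, g⟩
      -- the candidate bijection α → Σ b, Fin (c b)
      set F : α → Σ b, Fin (c b) := fun a => ⟨f a, g (f a) ⟨a, rfl⟩⟩ with hF
      have hinj : Function.Injective F := by
        have : Function.LeftInverse (fun x : Σ b, Fin (c b) => ((g x.1).symm x.2).1) F := by
          intro a
          show ((g (f a)).symm (g (f a) ⟨a, rfl⟩)).1 = a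
          rw [Equiv.symm_apply_apply]
        exact this.injective
      have hbij : Function.Bijective F := by
        rw [Fintype.bijective_iff_injective_and_card]
        refine ⟨hinj, ?_⟩
        rw [hcard_sigma]
      refine ⟨Equiv.ofBijective F hbij, ?_⟩
      refine Sigma.ext rfl (heq_of_eq ?_)
      funext b
      apply Equiv.ext
      rintro ⟨a, h⟩
      -- here `h : f a = b` (definitional unfolding)
      have h' : f a = b := h
      subst h'
      rfl
  have h1 : Nat.card (α ≃ Σ b, Fin (c b)) = (Fintype.card α).factorial := by
    rw [Nat.card_eq_fintype_card, Fintype.card_equiv (Fintype.equivOfCardEq hcard_sigma.symm)]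
  have h2 : Nat.card T =
      Nat.card {f : α → β // ∀ b, Nat.card {a // f a = b} = c b} * ∏ b, (c b).factorial := by
    rw [Nat.card_eq_fintype_card, Fintype.card_sigma]
    have : ∀ f : {f : α → β // ∀ b, Nat.card {a // f a = b} = c b},
        Fintype.card (∀ b : β, ({a // f.1 a = b} ≃ Fin (c b))) = ∏ b, (c b).factorial := by
      intro f
      rw [Fintype.card_pi]
      refine Finset.prod_congr rfl fun b _ => ?_
      have hfb : Fintype.card {a // f.1 a = b} = c b := by
        rw [← Nat.card_eq_fintype_card]; exact f.2 b
      rw [Fintype.card_equiv (Fintype.equivFinOfCardEq hfb)]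
      simp [hfb]
    rw [Finset.sum_congr rfl fun f _ => this f, Finset.sum_const, Finset.card_univ,
      Nat.card_eq_fintype_card, smul_eq_mul]
  rw [← h2, ← hΨ, h1]

end FiberCount


/-! ### The graph attached to level/parent data -/

open SimpleGraph

section Graph

variable {n : ℕ}

/-- the graph whose edges join each vertex of positive level to its parent -/
def mkGraph (L : Fin (n+1) → ℕ) (p : Fin (n+1) → Fin (n+1)) : SimpleGraph (Fin (n+1)) :=
  SimpleGraph.fromRel (fun u v => L v ≠ 0 ∧ u = p v)

variable {L : Fin (n+1) → ℕ} {p : Fin (n+1) → Fin (n+1)}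

lemma adj_iff (hp : ∀ v, L v ≠ 0 → L (p v) + 1 = L v) {u v : Fin (n+1)} :
    (mkGraph L p).Adj u v ↔ (L v ≠ 0 ∧ u = p v) ∨ (L u ≠ 0 ∧ v = p u) := by
  unfold mkGraph
  rw [SimpleGraph.fromRel_adj]
  constructor
  · rintro ⟨-, h⟩; exact h
  · intro h
    refine ⟨?_, h⟩
    rcases h with ⟨h1, rfl⟩ | ⟨h1, rfl⟩
    · have := hp v h1; intro he; rw [he] at this; omega
    · have := hp u h1; intro he; rw [← he] at this; omega

lemma walk_exists (hp : ∀ v, L v ≠ 0 → L (p v) + 1 = L v)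
    (hz : ∀ v, L v = 0 → v = 0) :
    ∀ v, ∃ w : (mkGraph L p).Walk 0 v, w.length = L v := by
  suffices H : ∀ (m : ℕ) (v), L v = m → ∃ w : (mkGraph L p).Walk 0 v, w.length = L v by
    intro v; exact H (L v) v rfl
  intro m
  induction m with
  | zero =>
    intro v hv
    have h := hz v hv
    subst h
    exact ⟨SimpleGraph.Walk.nil, by simp [hv]⟩
  | succ m ih =>
    intro v hv
    have hv0 : L v ≠ 0 := by omega
    have hpv : L (p v) = m := by have := hp v hv0; omega
    obtain ⟨w, hw⟩ := ih (p v) hpv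
    have hadj : (mkGraph L p).Adj (p v) v := (adj_iff hp).2 (Or.inl ⟨hv0, rfl⟩)
    exact ⟨w.concat hadj, by rw [SimpleGraph.Walk.length_concat, hw, hpv, hv]⟩

lemma le_of_walk (hp : ∀ v, L v ≠ 0 → L (p v) + 1 = L v) :
    ∀ {u v : Fin (n+1)} (w : (mkGraph L p).Walk u v), L v ≤ L u + w.length := by
  intro u v w
  induction w with
  | nil => simp
  | @cons a x c hadj q ih =>
    rw [adj_iff hp] at hadj
    rw [SimpleGraph.Walk.length_cons]
    rcases hadj with ⟨h1, rfl⟩ | ⟨h1, rfl⟩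
    · have := hp x h1; omega
    · have := hp a h1; omega

lemma dist_eq (hp : ∀ v, L v ≠ 0 → L (p v) + 1 = L v)
    (hz : ∀ v, L v = 0 → v = 0) (h0 : L 0 = 0) (v : Fin (n+1)) :
    (mkGraph L p).dist 0 v = L v := by
  obtain ⟨w, hw⟩ := walk_exists hp hz v
  refine le_antisymm (hw ▸ SimpleGraph.dist_le w) ?_
  obtain ⟨w', hw'⟩ := SimpleGraph.Reachable.exists_walk_length_eq_dist ⟨w⟩
  have := le_of_walk hp w'
  omega

lemma mk_connected (hp : ∀ v, L v ≠ 0 → L (p v) + 1 = L v)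
    (hz : ∀ v, L v = 0 → v = 0) : (mkGraph L p).Connected := by
  refine SimpleGraph.Connected.mk fun u v => ?_
  obtain ⟨wu, -⟩ := walk_exists hp hz u
  obtain ⟨wv, -⟩ := walk_exists hp hz v
  exact (Walk.reachable wu).symm.trans (Walk.reachable wv)

lemma iter_le (hp : ∀ v, L v ≠ 0 → L (p v) + 1 = L v)
    (hpfix : ∀ v, L v = 0 → p v = v) (m : ℕ) (v : Fin (n+1)) :
    L (p^[m] v) ≤ L v := by
  induction m with
  | zero => simp
  | succ m ih =>
    rw [Function.iterate_succ_apply']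
    by_cases h : L (p^[m] v) = 0
    · rw [hpfix _ h]; omega
    · have := hp _ h; omega

lemma bridge_parent (hp : ∀ v, L v ≠ 0 → L (p v) + 1 = L v)
    (hpfix : ∀ v, L v = 0 → p v = v) {v : Fin (n+1)} (hv : L v ≠ 0) :
    (mkGraph L p).IsBridge s(p v, v) := by
  rw [SimpleGraph.isBridge_iff]
  set G' := mkGraph L p \ SimpleGraph.fromEdgeSet {s(p v, v)} with hG'
  set C : Fin (n+1) → Prop := fun u => ∃ m, p^[m] u = v with hC
  have key : ∀ a b : Fin (n+1), G'.Adj a b → (C a ↔ C b) := by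
    have main : ∀ a b : Fin (n+1), L b ≠ 0 → a = p b → s(a, b) ≠ s(p v, v) → (C a ↔ C b) := by
      rintro a b hb rfl hne
      have hbv : b ≠ v := by rintro rfl; exact hne rfl
      constructor
      · rintro ⟨m, hm⟩
        exact ⟨m + 1, by rwa [Function.iterate_succ_apply]⟩
      · rintro ⟨m, hm⟩
        match m, hm with
        | 0, hm => exact absurd hm hbv
        | m + 1, hm => exact ⟨m, by rwa [Function.iterate_succ_apply] at hm⟩
    intro a b hab
    rw [hG', SimpleGraph.sdiff_adj, SimpleGraph.fromEdgeSet_adj] at hab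
    obtain ⟨hab, hne⟩ := hab
    have hne' : s(a, b) ≠ s(p v, v) := by
      intro h; exact hne ⟨Set.mem_singleton_iff.2 h, hab.ne⟩
    rw [adj_iff hp] at hab
    rcases hab with ⟨h1, rfl⟩ | ⟨h1, rfl⟩
    · exact main _ _ h1 rfl hne'
    · exact ((main _ _ h1 rfl) (by rwa [Sym2.eq_swap])).symm
  have walk_inv : ∀ {a b : Fin (n+1)} (w : G'.Walk a b), C a ↔ C b := by
    intro a b w
    induction w with
    | nil => rfl
    | @cons x y z hadj q ih => exact (key x y hadj).trans ih
  rintro ⟨w⟩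
  have hCv : C v := ⟨0, rfl⟩
  have : C (p v) := (walk_inv w).2 hCv
  obtain ⟨m, hm⟩ := this
  have h1 := iter_le hp hpfix m (p v)
  rw [hm] at h1
  have := hp v hv
  omega

lemma mk_isTree (hp : ∀ v, L v ≠ 0 → L (p v) + 1 = L v)
    (hz : ∀ v, L v = 0 → v = 0)
    (hpfix : ∀ v, L v = 0 → p v = v) : (mkGraph L p).IsTree := by
  refine ⟨mk_connected hp hz, ?_⟩
  rw [SimpleGraph.isAcyclic_iff_forall_adj_isBridge]
  intro u v hadj
  rcases (adj_iff hp).1 hadj with ⟨h1, rfl⟩ | ⟨h1, rfl⟩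
  · exact bridge_parent hp hpfix h1
  · rw [Sym2.eq_swap]; exact bridge_parent hp hpfix h1

lemma mk_edgeFinset_card (hp : ∀ v, L v ≠ 0 → L (p v) + 1 = L v)
    (hz : ∀ v, L v = 0 → v = 0) (h0 : L 0 = 0)
    [Fintype (mkGraph L p).edgeSet] : (mkGraph L p).edgeFinset.card = n := by
  classical
  have himg : (mkGraph L p).edgeFinset
      = (univ.filter (fun v => L v ≠ 0)).image (fun v => s(p v, v)) := by
    ext e
    induction e with
    | _ a b =>
      rw [SimpleGraph.mem_edgeFinset, SimpleGraph.mem_edgeSet]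
      constructor
      · intro hadj
        rcases (adj_iff hp).1 hadj with ⟨h1, rfl⟩ | ⟨h1, rfl⟩
        · exact Finset.mem_image.2 ⟨b, by simp [h1]⟩
        · rw [Sym2.eq_swap]
          exact Finset.mem_image.2 ⟨a, by simp [h1]⟩
      · intro h
        obtain ⟨w, hw, hww⟩ := Finset.mem_image.1 h
        rw [Finset.mem_filter] at hw
        rw [← SimpleGraph.mem_edgeSet, ← hww, SimpleGraph.mem_edgeSet]
        exact (adj_iff hp).2 (Or.inl ⟨hw.2, rfl⟩)
  rw [himg, Finset.card_image_of_injOn]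
  · have : univ.filter (fun v => L v ≠ 0) = univ.erase 0 := by
      ext x
      simp only [Finset.mem_filter, Finset.mem_erase, Finset.mem_univ, and_true, true_and]
      constructor
      · intro h he; exact h (he ▸ h0)
      · intro h hL; exact h (hz x hL)
    rw [this, Finset.card_erase_of_mem (Finset.mem_univ _), Finset.card_univ, Fintype.card_fin]
    simp
  · intro a ha b hb hab
    rw [Finset.mem_coe, Finset.mem_filter] at ha hb
    rcases Sym2.eq_iff.1 hab with ⟨h1, h2⟩ | ⟨h1, h2⟩
    · exact h2
    · have hpa := hp a ha.2
      have hpb := hp b hb.2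
      rw [h1] at hpa
      rw [← h2] at hpb
      omega

end Graph


/-! ### Pigeonhole lemmas for level functions, and parents in trees -/

section Pigeon

variable {n r : ℕ}

lemma natcard_filter (P : Fin (n+1) → Prop) [DecidablePred P] :
    Nat.card {v // P v} = (univ.filter P).card := by
  classical
  rw [Nat.card_eq_fintype_card, Fintype.card_subtype]

lemma fiber_sum {k : Fin r → ℕ} {L : Fin (n+1) → ℕ} (hsum : ∑ i, k i = n)
    (hc : ∀ l : Fin r, Nat.card {v : Fin (n+1) // L v = (l : ℕ) + 1} = k l) :
    ∑ l ∈ Finset.range r, (univ.filter (fun v => L v = l + 1)).card = n := by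
  classical
  rw [← Fin.sum_univ_eq_sum_range (fun l => (univ.filter (fun v => L v = l + 1)).card) r]
  refine Eq.trans (Finset.sum_congr rfl fun l _ => ?_) hsum
  rw [← hc l, natcard_filter]

lemma pigeonA {L : Fin (n+1) → ℕ} (h0 : L 0 = 0) (hLr : ∀ v, L v ≤ r)
    (hfib : ∑ l ∈ Finset.range r, (univ.filter (fun v => L v = l + 1)).card = n) :
    ∀ v, L v = 0 → v = 0 := by
  classical
  have hcount : (univ : Finset (Fin (n+1))).card
      = ∑ l ∈ Finset.range (r+1), (univ.filter (fun v => L v = l)).card :=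
    Finset.card_eq_sum_card_fiberwise (fun v _ => Finset.mem_range.2 (by have := hLr v; omega))
  rw [Finset.sum_range_succ' (fun l => (univ.filter (fun v => L v = l)).card) r] at hcount
  rw [hfib, Finset.card_univ, Fintype.card_fin] at hcount
  have h1 : (univ.filter (fun v => L v = 0)).card = 1 := by omega
  obtain ⟨x, hx⟩ := Finset.card_eq_one.1 h1
  have h0x : (0 : Fin (n+1)) ∈ univ.filter (fun v => L v = 0) := by
    simp [h0]
  intro v hv
  have hvx : v ∈ univ.filter (fun v => L v = 0) := by simp [hv]
  rw [hx, Finset.mem_singleton] at h0x hvx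
  rw [hvx, h0x]

lemma pigeonB {L : Fin (n+1) → ℕ} (h0 : L 0 = 0) (hz : ∀ v, L v = 0 → v = 0)
    (hfib : ∑ l ∈ Finset.range r, (univ.filter (fun v => L v = l + 1)).card = n) :
    ∀ v, L v ≤ r := by
  classical
  set B := (Finset.range (r+1)).biUnion (fun l => univ.filter (fun v => L v = l)) with hB
  have hdisj : ∀ l₁ ∈ Finset.range (r+1), ∀ l₂ ∈ Finset.range (r+1), l₁ ≠ l₂ →
      Disjoint (univ.filter (fun v => L v = l₁)) (univ.filter (fun v => L v = l₂)) := by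
    intro l₁ _ l₂ _ hne
    refine Finset.disjoint_left.2 fun a ha ha' => ?_
    rw [Finset.mem_filter] at ha ha'
    exact hne (ha.2 ▸ ha'.2)
  have hcard : B.card = ∑ l ∈ Finset.range (r+1), (univ.filter (fun v => L v = l)).card :=
    Finset.card_biUnion hdisj
  have hzero : univ.filter (fun v => L v = 0) = {0} := by
    ext x
    simp only [Finset.mem_filter, Finset.mem_univ, true_and, Finset.mem_singleton]
    exact ⟨fun h => hz x h, fun h => h ▸ h0⟩
  rw [Finset.sum_range_succ' (fun l => (univ.filter (fun v => L v = l)).card) r, hfib,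
    hzero, Finset.card_singleton] at hcard
  have hBu : B = univ := Finset.eq_univ_of_card _ (by rw [hcard, Fintype.card_fin])
  intro v
  have hv : v ∈ B := hBu ▸ Finset.mem_univ v
  rw [hB, Finset.mem_biUnion] at hv
  obtain ⟨l, hl, hvl⟩ := hv
  rw [Finset.mem_filter] at hvl
  rw [Finset.mem_range] at hl
  omega

lemma parent_exists {G : SimpleGraph (Fin (n+1))} (hc : G.Connected) {v : Fin (n+1)}
    (hv : G.dist 0 v ≠ 0) :
    ∃ u, G.Adj u v ∧ G.dist 0 u + 1 = G.dist 0 v := by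
  have hne : v ≠ 0 := by
    rintro rfl
    exact hv SimpleGraph.dist_self
  obtain ⟨w, hw⟩ := SimpleGraph.Reachable.exists_walk_length_eq_dist (hc.preconnected 0 v)
  obtain ⟨x, hadj, q, hq⟩ := SimpleGraph.Walk.exists_eq_cons_of_ne hne w.reverse
  refine ⟨x, hadj.symm, ?_⟩
  have hlen : q.length + 1 = G.dist 0 v := by
    have := congrArg SimpleGraph.Walk.length hq
    rw [SimpleGraph.Walk.length_reverse, SimpleGraph.Walk.length_cons] at this
    omega
  have h1 : G.dist 0 x ≤ q.length := by
    have := SimpleGraph.dist_le q.reverse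
    rwa [SimpleGraph.Walk.length_reverse] at this
  have h2 : G.dist 0 v ≤ G.dist 0 x + 1 := by
    obtain ⟨wx, hwx⟩ := SimpleGraph.Reachable.exists_walk_length_eq_dist (hc.preconnected 0 x)
    have := SimpleGraph.dist_le (wx.concat hadj.symm)
    rw [SimpleGraph.Walk.length_concat, hwx] at this
    exact this
  omega

end Pigeon


/-! ### Level/parent data and the bijection with trees -/

section Data

variable (n r : ℕ) (k : Fin r → ℕ)

@[ext]
structure LData : Type where
  L : Fin (n+1) → ℕ
  p : Fin (n+1) → Fin (n+1)
  hL0 : L 0 = 0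
  hLr : ∀ v, L v ≤ r
  hp : ∀ v, L v ≠ 0 → L (p v) + 1 = L v
  hpfix : ∀ v, L v = 0 → p v = v
  hcard : ∀ l : Fin r, Nat.card {v : Fin (n+1) // L v = (l : ℕ) + 1} = k l

variable {n r k}

lemma LData.hz (D : LData n r k) (hsum : ∑ i, k i = n) : ∀ v, D.L v = 0 → v = 0 :=
  pigeonA D.hL0 D.hLr (fiber_sum hsum D.hcard)

lemma mkGraph_eq_of (G : SimpleGraph (Fin (n+1))) (hT : G.IsTree)
    {L' : Fin (n+1) → ℕ} {p' : Fin (n+1) → Fin (n+1)}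
    (h0 : L' 0 = 0) (hz : ∀ v, L' v = 0 → v = 0)
    (hpcond : ∀ v, L' v ≠ 0 → L' (p' v) + 1 = L' v)
    (hadj : ∀ v, L' v ≠ 0 → G.Adj (p' v) v) : mkGraph L' p' = G := by
  classical
  letI : Fintype (mkGraph L' p').edgeSet := Fintype.ofFinite _
  letI : Fintype G.edgeSet := Fintype.ofFinite _
  have hle : mkGraph L' p' ≤ G := by
    intro a b hab
    rcases (adj_iff hpcond).1 hab with ⟨h1, rfl⟩ | ⟨h1, rfl⟩
    · exact hadj b h1
    · exact (hadj a h1).symm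
  have hsub : (mkGraph L' p').edgeFinset ⊆ G.edgeFinset := by
    intro e he
    rw [SimpleGraph.mem_edgeFinset] at he ⊢
    exact SimpleGraph.edgeSet_mono hle he
  have hc1 : (mkGraph L' p').edgeFinset.card = n := mk_edgeFinset_card hpcond hz h0
  have hc2 : G.edgeFinset.card = n := by
    have := hT.card_edgeFinset
    rw [Fintype.card_fin] at this
    omega
  exact SimpleGraph.edgeFinset_inj.1 (Finset.eq_of_subset_of_card_le hsub (by omega))

noncomputable def treeEquiv (hsum : ∑ i, k i = n) :
    LData n r k ≃ {G : SimpleGraph (Fin (n + 1)) //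
        G.IsTree ∧
          ∀ l : Fin r, Nat.card {v : Fin (n + 1) // G.dist 0 v = (l : ℕ) + 1} = k l} where
  toFun D := ⟨mkGraph D.L D.p,
    mk_isTree D.hp (D.hz hsum) D.hpfix,
    fun l => by
      rw [← D.hcard l]
      exact Nat.card_congr (Equiv.subtypeEquivRight fun v => by
        rw [dist_eq D.hp (D.hz hsum) D.hL0])⟩
  invFun := fun ⟨G, hT, hl⟩ =>
    { L := fun v => G.dist 0 v
      p := fun v => if h : G.dist 0 v ≠ 0 then
          Classical.choose (parent_exists hT.isConnected h) else v
      hL0 := SimpleGraph.dist_self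
      hLr := pigeonB SimpleGraph.dist_self
        (fun v hv => (hT.isConnected.dist_eq_zero_iff.1 hv).symm)
        (fiber_sum hsum hl)
      hp := fun v hv => by
        rw [dif_pos hv]
        exact (Classical.choose_spec (parent_exists hT.isConnected hv)).2
      hpfix := fun v hv => by
        rw [dif_neg (not_not_intro hv)]
      hcard := hl }
  left_inv D := by
    have hz := D.hz hsum
    have hdist : ∀ v, (mkGraph D.L D.p).dist 0 v = D.L v := dist_eq D.hp hz D.hL0
    refine LData.ext ?_ ?_
    · funext v
      exact hdist v
    · funext v
      by_cases hv : D.L v = 0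
      · show (if h : (mkGraph D.L D.p).dist 0 v ≠ 0 then _ else v) = D.p v
        rw [dif_neg (by rw [hdist v]; simpa using hv)]
        exact (D.hpfix v hv).symm
      · have hv' : (mkGraph D.L D.p).dist 0 v ≠ 0 := by rw [hdist v]; exact hv
        show (if h : (mkGraph D.L D.p).dist 0 v ≠ 0 then
          Classical.choose (parent_exists (mk_isTree D.hp hz D.hpfix).isConnected h) else v)
            = D.p v
        rw [dif_pos hv']
        obtain ⟨hadj, hd⟩ :=
          Classical.choose_spec (parent_exists (mk_isTree D.hp hz D.hpfix).isConnected hv')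
        set u := Classical.choose
          (parent_exists (mk_isTree D.hp hz D.hpfix).isConnected hv') with hu
        rcases (adj_iff D.hp).1 hadj with ⟨h1, he⟩ | ⟨h1, he⟩
        · exact he
        · exfalso
          have h2 := D.hp u h1
          rw [← he] at h2
          rw [hdist u, hdist v] at hd
          omega
  right_inv := by
    rintro ⟨G, hT, hl⟩
    apply Subtype.ext
    refine mkGraph_eq_of G hT SimpleGraph.dist_self
      (fun v hv => (hT.isConnected.dist_eq_zero_iff.1 hv).symm) ?_ ?_
    · intro v hv
      dsimp only at hv ⊢
      rw [dif_pos hv]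
      exact (Classical.choose_spec (parent_exists hT.isConnected hv)).2
    · intro v hv
      dsimp only at hv ⊢
      rw [dif_pos hv]
      exact (Classical.choose_spec (parent_exists hT.isConnected hv)).1

end Data


/-! ### Counting the data -/

section Count

variable {n r : ℕ} {k : Fin r → ℕ}

def LevelCond (n r : ℕ) (k : Fin r → ℕ) (L : Fin (n+1) → ℕ) : Prop :=
  L 0 = 0 ∧ (∀ v, L v ≤ r) ∧ ∀ l : Fin r, Nat.card {v : Fin (n+1) // L v = (l : ℕ) + 1} = k l

def PCond (L : Fin (n+1) → ℕ) (v u : Fin (n+1)) : Prop :=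
  if L v = 0 then u = v else L u + 1 = L v

def dataEquiv :
    LData n r k ≃ Σ L : {L : Fin (n+1) → ℕ // LevelCond n r k L}, ∀ v, {u // PCond L.1 v u} where
  toFun D := ⟨⟨D.L, D.hL0, D.hLr, D.hcard⟩, fun v => ⟨D.p v, by
    unfold PCond
    by_cases h : D.L v = 0
    · rw [if_pos h]; exact D.hpfix v h
    · rw [if_neg h]; exact D.hp v h⟩⟩
  invFun t :=
    { L := t.1.1
      p := fun v => (t.2 v).1
      hL0 := t.1.2.1
      hLr := t.1.2.2.1
      hcard := t.1.2.2.2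
      hp := fun v hv => by have h := (t.2 v).2; unfold PCond at h; rwa [if_neg hv] at h
      hpfix := fun v hv => by have h := (t.2 v).2; unfold PCond at h; rwa [if_pos hv] at h }
  left_inv D := rfl
  right_inv t := rfl

/-- `k` extended to `ℕ` by `1`. -/
def Kf (k : Fin r → ℕ) (i : ℕ) : ℕ := if h : i < r then k ⟨i, h⟩ else 1

lemma chainProd_eq (k : Fin r → ℕ) (hr : 1 ≤ r) :
    chainProd k = ∏ i ∈ Finset.range (r - 1), Kf k i ^ Kf k (i + 1) := by
  unfold chainProd
  have h1 : ∀ i : Fin r, (if h : (i : ℕ) + 1 < r then (k i) ^ (k ⟨(i : ℕ) + 1, h⟩) else 1)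
      = (fun j : ℕ => if j + 1 < r then Kf k j ^ Kf k (j + 1) else 1) (i : ℕ) := by
    intro i
    dsimp only
    by_cases h : (i : ℕ) + 1 < r
    · rw [dif_pos h, if_pos h]
      unfold Kf
      rw [dif_pos i.isLt, dif_pos h, Fin.eta]
    · rw [dif_neg h, if_neg h]
  rw [Finset.prod_congr rfl (fun i _ => h1 i),
    Fin.prod_univ_eq_prod_range (fun j : ℕ => if j + 1 < r then Kf k j ^ Kf k (j + 1) else 1) r]
  obtain ⟨m, rfl⟩ : ∃ m, r = m + 1 := ⟨r - 1, by omega⟩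
  rw [Finset.prod_range_succ]
  rw [if_neg (by omega)]
  rw [mul_one]
  simp only [Nat.add_sub_cancel]
  refine Finset.prod_congr rfl fun j hj => ?_
  rw [Finset.mem_range] at hj
  rw [if_pos (by omega)]

lemma pcond_card (hsum : ∑ i, k i = n) (hr : 1 ≤ r) {L : Fin (n+1) → ℕ}
    (hL : LevelCond n r k L) :
    Nat.card (∀ v : Fin (n+1), {u // PCond L v u}) = chainProd k := by
  classical
  obtain ⟨h0, hLr, hc⟩ := hL
  have hz : ∀ v, L v = 0 → v = 0 := pigeonA h0 hLr (fiber_sum hsum hc)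
  have card0 : Nat.card {u : Fin (n+1) // L u = 0} = 1 := by
    rw [Nat.card_congr (Equiv.subtypeEquivRight (fun x => ⟨hz x, fun h => h ▸ h0⟩))]
    rw [Nat.card_eq_fintype_card, Fintype.card_subtype_eq]
  set val : ℕ → ℕ := fun l => if l = 0 then 1 else Nat.card {u : Fin (n+1) // L u + 1 = l}
    with hval
  have hcv : ∀ v, Nat.card {u // PCond L v u} = val (L v) := by
    intro v
    by_cases h : L v = 0
    · rw [h]
      have e : {u // PCond L v u} ≃ {u : Fin (n+1) // u = v} :=
        Equiv.subtypeEquivRight (fun u => by unfold PCond; rw [if_pos h])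
      rw [Nat.card_congr e, Nat.card_eq_fintype_card, Fintype.card_subtype_eq, hval]
      simp
    · have e : {u // PCond L v u} ≃ {u : Fin (n+1) // L u + 1 = L v} :=
        Equiv.subtypeEquivRight (fun u => by unfold PCond; rw [if_neg h])
      rw [Nat.card_congr e, hval]
      dsimp only
      rw [if_neg h]
  rw [Nat.card_pi, Finset.prod_congr rfl (fun v _ => hcv v)]
  have hmaps : ∀ v ∈ (univ : Finset (Fin (n+1))), L v ∈ Finset.range (r+1) :=
    fun v _ => Finset.mem_range.2 (by have := hLr v; omega)
  rw [← Finset.prod_fiberwise_of_maps_to hmaps (fun v => val (L v))]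
  have inner : ∀ l ∈ Finset.range (r+1),
      (∏ v ∈ univ.filter (fun v => L v = l), val (L v))
        = val l ^ (univ.filter (fun v => L v = l)).card := by
    intro l _
    rw [Finset.prod_congr rfl (fun v hv => by rw [(Finset.mem_filter.1 hv).2]),
      Finset.prod_const]
  rw [Finset.prod_congr rfl inner,
    Finset.prod_range_succ' (fun l => val l ^ (univ.filter (fun v => L v = l)).card) r]
  have hv0 : val 0 ^ (univ.filter (fun v => L v = 0)).card = 1 := by
    have : val 0 = 1 := by rw [hval]; simp
    rw [this, one_pow]
  rw [hv0, mul_one, chainProd_eq k hr]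
  obtain ⟨m, rfl⟩ : ∃ m, r = m + 1 := ⟨r - 1, by omega⟩
  rw [Finset.prod_range_succ'
    (fun l => val (l+1) ^ (univ.filter (fun v => L v = l+1)).card) m]
  have hval1 : val 1 = 1 := by
    rw [hval]
    dsimp only
    rw [if_neg one_ne_zero,
      Nat.card_congr (Equiv.subtypeEquivRight (fun u => (by omega : L u + 1 = 1 ↔ L u = 0))),
      card0]
  rw [hval1, one_pow, mul_one]
  simp only [Nat.add_sub_cancel]
  have hcardf : ∀ (l : ℕ) (h : l < m + 1), (univ.filter (fun v => L v = l + 1)).card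
      = k ⟨l, h⟩ := by
    intro l h
    rw [← natcard_filter]
    exact hc ⟨l, h⟩
  refine Finset.prod_congr rfl fun j hj => ?_
  rw [Finset.mem_range] at hj
  have h1 : j < m + 1 := by omega
  have h2 : j + 1 < m + 1 := by omega
  have hv : val (j + 1 + 1) = k ⟨j, h1⟩ := by
    rw [hval]
    dsimp only
    rw [if_neg (by omega),
      Nat.card_congr (Equiv.subtypeEquivRight
        (fun u => (by omega : L u + 1 = j + 1 + 1 ↔ L u = j + 1)))]
    exact hc ⟨j, h1⟩
  rw [hv, hcardf (j+1) h2]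
  unfold Kf
  rw [dif_pos h1, dif_pos h2]

end Count


section LevelCount

variable {n r : ℕ} {k : Fin r → ℕ}

noncomputable def levelEquiv (hsum : ∑ i, k i = n) (hr : 1 ≤ r) :
    {L : Fin (n+1) → ℕ // LevelCond n r k L} ≃
      {f : {v : Fin (n+1) // v ≠ 0} → Fin r // ∀ b, Nat.card {a // f a = b} = k b} where
  toFun := fun ⟨L, h0, hLr, hc⟩ =>
    ⟨fun a => ⟨L a.1 - 1, by
        have hz := pigeonA h0 hLr (fiber_sum hsum hc)
        have h1 : L a.1 ≠ 0 := fun h => a.2 (hz _ h)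
        have h2 := hLr a.1
        omega⟩,
      fun b => by
        have hz := pigeonA h0 hLr (fiber_sum hsum hc)
        rw [← hc b]
        refine Nat.card_congr ⟨fun x => ⟨x.1.1, ?_⟩, fun v => ⟨⟨v.1, ?_⟩, ?_⟩, ?_, ?_⟩
        · have hx := congrArg Fin.val x.2
          dsimp at hx
          have h1 : L x.1.1 ≠ 0 := fun h => x.1.2 (hz _ h)
          omega
        · intro h
          have := v.2
          rw [h, h0] at this
          omega
        · apply Fin.ext
          have := v.2
          dsimp
          omega
        · intro x
          apply Subtype.ext
          apply Subtype.ext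
          rfl
        · intro v
          apply Subtype.ext
          rfl⟩
  invFun := fun ⟨f, hf⟩ =>
    ⟨fun v => if h : v = 0 then 0 else (f ⟨v, h⟩ : ℕ) + 1,
      by simp,
      fun v => by
        dsimp only
        by_cases h : v = 0
        · rw [dif_pos h]; omega
        · rw [dif_neg h]
          have := (f ⟨v, h⟩).isLt
          omega,
      fun l => by
        rw [← hf l]
        refine Nat.card_congr ⟨fun v => ⟨⟨v.1, ?_⟩, ?_⟩, fun x => ⟨x.1.1, ?_⟩, ?_, ?_⟩
        · intro h
          have := v.2
          dsimp only at this
          rw [dif_pos h] at this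
          omega
        · have := v.2
          dsimp only at this
          have hne : v.1 ≠ 0 := by
            intro h
            rw [dif_pos h] at this
            omega
          rw [dif_neg hne] at this
          apply Fin.ext
          omega
        · have hx := congrArg Fin.val x.2
          dsimp only
          rw [dif_neg x.1.2]
          have : (⟨x.1.1, x.1.2⟩ : {v : Fin (n+1) // v ≠ 0}) = x.1 := rfl
          rw [this, hx]
        · intro v
          apply Subtype.ext
          rfl
        · intro x
          apply Subtype.ext
          apply Subtype.ext
          rfl⟩
  left_inv := fun ⟨L, h0, hLr, hc⟩ => by
    apply Subtype.ext
    funext v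
    dsimp only
    by_cases h : v = 0
    · rw [dif_pos h, h, h0]
    · rw [dif_neg h]
      have hz := pigeonA h0 hLr (fiber_sum hsum hc)
      have h1 : L v ≠ 0 := fun hh => h (hz _ hh)
      omega
  right_inv := fun ⟨f, hf⟩ => by
    apply Subtype.ext
    funext a
    apply Fin.ext
    dsimp only
    rw [dif_neg a.2]
    have : (⟨a.1, a.2⟩ : {v : Fin (n+1) // v ≠ 0}) = a := rfl
    rw [this]
    omega

lemma level_card (hsum : ∑ i, k i = n) (hr : 1 ≤ r) :
    Nat.card {L : Fin (n+1) → ℕ // LevelCond n r k L} * ∏ i, (k i).factorial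
      = n.factorial := by
  classical
  rw [Nat.card_congr (levelEquiv hsum hr)]
  have hcard : Fintype.card {v : Fin (n+1) // v ≠ 0} = n := by
    simp [Fintype.card_subtype_compl]
  have := card_fiber_fun (α := {v : Fin (n+1) // v ≠ 0}) k (by rw [hcard, hsum])
  rwa [hcard] at this

end LevelCount

end RootedTreeAux

theorem rooted_trees_by_levels (n r : ℕ) (hn : 1 ≤ n) (hr : 1 ≤ r)
    (k : Fin r → ℕ) (hk : ∀ i, 1 ≤ k i) (hsum : ∑ i, k i = n) :
    Nat.card {G : SimpleGraph (Fin (n + 1)) //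
        G.IsTree ∧
          ∀ l : Fin r, Nat.card {v : Fin (n + 1) // G.dist 0 v = (l : ℕ) + 1} = k l}
      = (n.factorial / ∏ i, (k i).factorial) * chainProd k := by
  classical
  rw [Nat.card_congr (RootedTreeAux.treeEquiv hsum).symm,
    Nat.card_congr RootedTreeAux.dataEquiv]
  have hfin : ∀ Lsub : {L : Fin (n+1) → ℕ // RootedTreeAux.LevelCond n r k L},
      Nonempty ((∀ v, {u // RootedTreeAux.PCond Lsub.1 v u}) ≃ Fin (chainProd k)) := fun Lsub => by
    letI := Fintype.ofFinite (∀ v, {u // RootedTreeAux.PCond Lsub.1 v u})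
    exact ⟨Fintype.equivFinOfCardEq (by
      rw [← Nat.card_eq_fintype_card]
      exact RootedTreeAux.pcond_card hsum hr Lsub.2)⟩
  rw [Nat.card_congr ((Equiv.sigmaCongrRight (fun Lsub => (hfin Lsub).some)).trans
    (Equiv.sigmaEquivProd _ _))]
  rw [Nat.card_prod]
  have hfinc : Nat.card (Fin (chainProd k)) = chainProd k := by
    rw [Nat.card_eq_fintype_card, Fintype.card_fin]
  rw [hfinc]
  have hpos : 0 < ∏ i, (k i).factorial := Finset.prod_pos (fun i _ => Nat.factorial_pos _)
  have hlev : Nat.card {L : Fin (n+1) → ℕ // RootedTreeAux.LevelCond n r k L}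
      = n.factorial / ∏ i, (k i).factorial := by
    rw [← RootedTreeAux.level_card hsum hr, Nat.mul_div_cancel _ hpos]
  rw [hlev]
end
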